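/- arXiv:2512.00286 — 2 statements merged into one kernel-verified Lean document; each statement's English description precedes it below -/
import Mathlib

section
/- Let (H, B) be a Rota–Baxter Hopf algebra of weight −1 and define B̃(x) = x₁ B(S(x₂)). Then for all x, y ∈ H the following identity holds: S(B(S(B̃(S(y₁))) B̃(x) B̃(S(y₂)))) · S(B(y₃)) = S(B(y B̃(x))). -/
open TensorProduct LinearMap

noncomputable section

universe u

variable {K H : Type u} [Field K] [CharZero K] [Ring H] [HopfAlgebra K H]

/-- The antipode of `H` as a `K`-linear map. -/
def aS (K H : Type u) [Field K] [Ring H] [HopfAlgebra K H] : H →ₗ[K] H :=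
  HopfAlgebra.antipode K

/-- Convolution-type composite: `conv f g x = f x₁ * g x₂` in Sweedler notation,
where the source may be any coalgebra `C`. -/
def conv {C : Type u} [AddCommGroup C] [Module K C] [Coalgebra K C]
    (f g : C →ₗ[K] H) : C →ₗ[K] H :=
  LinearMap.mul' K H ∘ₗ TensorProduct.map f g ∘ₗ Coalgebra.comul

/-- `wrap f g h (a ⊗ₜ c) = f a₁ * (g c * h a₂)` in Sweedler notation. -/
def wrap {C : Type u} [AddCommGroup C] [Module K C] [Coalgebra K C]
    (f : C →ₗ[K] H) (g : H →ₗ[K] H) (h : C →ₗ[K] H) : C ⊗[K] H →ₗ[K] H :=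
  LinearMap.mul' K H ∘ₗ
    TensorProduct.map f
      (LinearMap.mul' K H ∘ₗ TensorProduct.map g h ∘ₗ (TensorProduct.comm K C H).toLinearMap) ∘ₗ
    (TensorProduct.assoc K C C H).toLinearMap ∘ₗ
    TensorProduct.map Coalgebra.comul LinearMap.id

/-- The descendent product: `mulB B (x ⊗ₜ y) = B x₁ * (y * (S (B x₂) * x₃))`,
i.e. `x *_B y = B(x₁) y S(B(x₂)) x₃` in Sweedler notation. -/
def mulB (B : H →ₗ[K] H) : H ⊗[K] H →ₗ[K] H :=
  wrap B LinearMap.id (conv (aS K H ∘ₗ B) LinearMap.id)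

/-- `Bt B x = x₁ * B (S x₂)`, i.e. the operator `B̃`. -/
def Bt (B : H →ₗ[K] H) : H →ₗ[K] H := conv LinearMap.id (B ∘ₗ aS K H)

/-- `SB B x = S(B x₁) * (S x₂ * B x₃)`, the antipode `S_B` of the descendent Hopf algebra. -/
def SB (B : H →ₗ[K] H) : H →ₗ[K] H := conv (aS K H ∘ₗ B) (conv (aS K H) B)

/-- `H` is cocommutative. -/
def IsCocomm (K H : Type u) [Field K] [Ring H] [HopfAlgebra K H] : Prop :=
  ∀ x : H, (TensorProduct.comm K H H) (Coalgebra.comul x) = Coalgebra.comul x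

/-- `B` is a Rota–Baxter operator of weight `-1` on `H`: it is a coalgebra map and
`B x * B y = B (B(x₁) y S(B(x₂)) x₃)` in Sweedler notation. -/
def IsRotaBaxter (B : H →ₗ[K] H) : Prop :=
  (Coalgebra.comul ∘ₗ B = TensorProduct.map B B ∘ₗ Coalgebra.comul) ∧
  (Coalgebra.counit ∘ₗ B = Coalgebra.counit) ∧
  ∀ x y : H, B x * B y = B (mulB B (x ⊗ₜ[K] y))


section CV
open Coalgebra Finset
set_option linter.unusedSectionVars false
variable {C A : Type u} [AddCommGroup C] [Module K C] [Coalgebra K C]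
  [Ring A] [Algebra K A]

/-- generalized convolution -/
def cv (f g : C →ₗ[K] A) : C →ₗ[K] A :=
  LinearMap.mul' K A ∘ₗ TensorProduct.map f g ∘ₗ Coalgebra.comul

/-- convolution unit -/
def cvUnit : C →ₗ[K] A := Algebra.linearMap K A ∘ₗ Coalgebra.counit

lemma cv_repr {ι : Type*} (f g : C →ₗ[K] A) {a : C} (r : Coalgebra.Repr K a ι) :
    cv f g a = ∑ i ∈ r.index, f (r.left i) * g (r.right i) := by
  simp only [cv, LinearMap.comp_apply, ← r.eq, map_sum, TensorProduct.map_tmul,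
    LinearMap.mul'_apply]

lemma counit_smul_left_sum {ι : Type*} {a : C} (r : Coalgebra.Repr K a ι) :
    ∑ i ∈ r.index, Coalgebra.counit (R := K) (r.right i) • r.left i = a := by
  have h := congrArg (TensorProduct.rid K C) (Coalgebra.sum_tmul_counit_eq (R := K) r)
  rw [map_sum] at h
  simp only [TensorProduct.rid_tmul, one_smul] at h
  exact h

lemma counit_smul_right_sum {ι : Type*} {a : C} (r : Coalgebra.Repr K a ι) :
    ∑ i ∈ r.index, Coalgebra.counit (R := K) (r.left i) • r.right i = a := by
  have h := congrArg (TensorProduct.lid K C) (Coalgebra.sum_counit_tmul_eq (R := K) r)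
  rw [map_sum] at h
  simp only [TensorProduct.lid_tmul, one_smul] at h
  exact h

lemma cv_unit_right (f : C →ₗ[K] A) : cv f cvUnit = f := by
  ext a
  rw [cv_repr f cvUnit (ℛ K a)]
  simp only [cvUnit, LinearMap.comp_apply, Algebra.linearMap_apply, Algebra.algebraMap_eq_smul_one]
  calc ∑ i ∈ (ℛ K a).index, f ((ℛ K a).left i) * Coalgebra.counit (R := K) ((ℛ K a).right i) • 1
      = f (∑ i ∈ (ℛ K a).index, Coalgebra.counit (R := K) ((ℛ K a).right i) • (ℛ K a).left i) := by
        simp [mul_smul_comm, map_sum]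
    _ = f a := by rw [counit_smul_left_sum]

lemma cv_unit_left (f : C →ₗ[K] A) : cv cvUnit f = f := by
  ext a
  rw [cv_repr cvUnit f (ℛ K a)]
  simp only [cvUnit, LinearMap.comp_apply, Algebra.linearMap_apply, Algebra.algebraMap_eq_smul_one]
  calc ∑ i ∈ (ℛ K a).index, (Coalgebra.counit (R := K) ((ℛ K a).left i) • (1:A)) * f ((ℛ K a).right i)
      = f (∑ i ∈ (ℛ K a).index, Coalgebra.counit (R := K) ((ℛ K a).left i) • (ℛ K a).right i) := by
        simp [smul_mul_assoc, map_sum]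
    _ = f a := by rw [counit_smul_right_sum]

/-- coassociativity tool -/
lemma repr_assoc {M : Type u} [AddCommGroup M] [Module K M] {ι κ Λ : Type*}
    (φ : C ⊗[K] (C ⊗[K] C) →ₗ[K] M) {a : C} (r : Coalgebra.Repr K a ι)
    (rl : (i : ι) → Coalgebra.Repr K (r.left i) κ)
    (rr : (i : ι) → Coalgebra.Repr K (r.right i) Λ) :
    ∑ i ∈ r.index, ∑ j ∈ (rl i).index,
        φ ((rl i).left j ⊗ₜ[K] ((rl i).right j ⊗ₜ[K] r.right i)) =
    ∑ i ∈ r.index, ∑ j ∈ (rr i).index,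
        φ (r.left i ⊗ₜ[K] ((rr i).left j ⊗ₜ[K] (rr i).right j)) := by
  have h := Coalgebra.sum_tmul_tmul_eq (R := K) (κ := fun _ => κ) (Λ := fun _ => Λ) r rl rr
  have := congrArg φ h
  simpa [map_sum] using this

lemma cv_assoc (f g h : C →ₗ[K] A) : cv (cv f g) h = cv f (cv g h) := by
  ext a
  set r := ℛ K a
  rw [cv_repr (cv f g) h r, cv_repr f (cv g h) r]
  have lhs : ∀ i ∈ r.index, cv f g (r.left i) * h (r.right i) =
      ∑ j ∈ (ℛ K (r.left i)).index,
        f ((ℛ K (r.left i)).left j) * (g ((ℛ K (r.left i)).right j) * h (r.right i)) := by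
    intro i _
    rw [cv_repr f g (ℛ K (r.left i)), Finset.sum_mul]
    exact Finset.sum_congr rfl fun j _ => mul_assoc _ _ _
  have rhs : ∀ i ∈ r.index, f (r.left i) * cv g h (r.right i) =
      ∑ j ∈ (ℛ K (r.right i)).index,
        f (r.left i) * (g ((ℛ K (r.right i)).left j) * h ((ℛ K (r.right i)).right j)) := by
    intro i _
    rw [cv_repr g h (ℛ K (r.right i)), Finset.mul_sum]
  rw [Finset.sum_congr rfl lhs, Finset.sum_congr rfl rhs]
  exact repr_assoc (LinearMap.mul' K A ∘ₗ
      TensorProduct.map f (LinearMap.mul' K A ∘ₗ TensorProduct.map g h)) r _ _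

lemma cv_inv_unique {f g h : C →ₗ[K] A} (h1 : cv f g = cvUnit) (h2 : cv g h = cvUnit) :
    f = h := by
  have : cv f (cv g h) = cv (cv f g) h := (cv_assoc f g h).symm
  rw [h1, h2, cv_unit_right, cv_unit_left] at this
  exact this

lemma cv_comp_coalgHom {D : Type u} [AddCommGroup D] [Module K D] [Coalgebra K D]
    (f g : D →ₗ[K] A) (φ : C →ₗ[K] D)
    (hφ : Coalgebra.comul ∘ₗ φ = TensorProduct.map φ φ ∘ₗ Coalgebra.comul) :
    cv f g ∘ₗ φ = cv (f ∘ₗ φ) (g ∘ₗ φ) := by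
  have h2 : TensorProduct.map f g ∘ₗ (TensorProduct.map φ φ ∘ₗ Coalgebra.comul) =
      TensorProduct.map (f ∘ₗ φ) (g ∘ₗ φ) ∘ₗ Coalgebra.comul := by
    rw [← LinearMap.comp_assoc, ← TensorProduct.map_comp]
  rw [cv, cv, LinearMap.comp_assoc, LinearMap.comp_assoc, hφ, h2]

lemma cv_algHom_comp {B : Type u} [Ring B] [Algebra K B]
    (f g : C →ₗ[K] A) (ψ : A →ₗ[K] B)
    (hψ : ψ ∘ₗ LinearMap.mul' K A = LinearMap.mul' K B ∘ₗ TensorProduct.map ψ ψ) :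
    ψ ∘ₗ cv f g = cv (ψ ∘ₗ f) (ψ ∘ₗ g) := by
  have h2 : TensorProduct.map ψ ψ ∘ₗ (TensorProduct.map f g ∘ₗ Coalgebra.comul) =
      TensorProduct.map (ψ ∘ₗ f) (ψ ∘ₗ g) ∘ₗ Coalgebra.comul := by
    rw [← LinearMap.comp_assoc, ← TensorProduct.map_comp]
  rw [cv, cv, ← LinearMap.comp_assoc, hψ, LinearMap.comp_assoc, h2]

end CV
section HopfAux
variable {K H : Type u} [Field K] [CharZero K] [Ring H] [HopfAlgebra K H]
open Coalgebra Finset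

local notation "σ" => (HopfAlgebra.antipode K : H →ₗ[K] H)
local notation "m" => (LinearMap.mul' K H)

lemma cv_antipode_id : cv σ (LinearMap.id) = (cvUnit : H →ₗ[K] H) :=
  HopfAlgebra.mul_antipode_rTensor_comul

lemma cv_id_antipode : cv (LinearMap.id) σ = (cvUnit : H →ₗ[K] H) :=
  HopfAlgebra.mul_antipode_lTensor_comul

lemma antipode_one : σ (1 : H) = 1 := by
  have := HopfAlgebra.mul_antipode_rTensor_comul_apply (R := K) (1 : H)
  simpa [Algebra.TensorProduct.one_def] using this

lemma mul_tttc (x y : H ⊗[K] H) :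
    TensorProduct.map m m
      (TensorProduct.tensorTensorTensorComm K H H H H (x ⊗ₜ y)) = x * y := by
  induction x using TensorProduct.induction_on with
  | zero => simp
  | tmul a a' =>
    induction y using TensorProduct.induction_on with
    | zero => simp
    | tmul b b' => simp [Algebra.TensorProduct.tmul_mul_tmul]
    | add u v hu hv => simp only [tmul_add, map_add, hu, hv, mul_add]
  | add u v hu hv => simp only [add_tmul, map_add, hu, hv, add_mul]

lemma comul_tmul' (a b : H) : Coalgebra.comul (R := K) (a ⊗ₜ[K] b) =
    TensorProduct.tensorTensorTensorComm K H H H H (Coalgebra.comul a ⊗ₜ Coalgebra.comul b) := rfl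

lemma counit_tmul' (a b : H) : Coalgebra.counit (R := K) (a ⊗ₜ[K] b) =
    Coalgebra.counit (R := K) a * Coalgebra.counit (R := K) b := by
  simp [TensorProduct.instCoalgebraStruct, mul_comm]

lemma comul_comp_mul : Coalgebra.comul ∘ₗ m =
    TensorProduct.map m m ∘ₗ (Coalgebra.comul : H ⊗[K] H →ₗ[K] _) := by
  apply TensorProduct.ext'
  intro a b
  simp only [LinearMap.comp_apply, LinearMap.mul'_apply, Bialgebra.comul_mul, comul_tmul']
  rw [mul_tttc]

lemma counit_comp_mul : (Coalgebra.counit : H →ₗ[K] K) ∘ₗ m =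
    (Coalgebra.counit : H ⊗[K] H →ₗ[K] K) := by
  apply TensorProduct.ext'
  intro a b
  simp only [LinearMap.comp_apply, LinearMap.mul'_apply, Bialgebra.counit_mul, counit_tmul']

lemma mul_comp_comul : (Coalgebra.comul : H →ₗ[K] H ⊗[K] H) ∘ₗ m =
    LinearMap.mul' K (H ⊗[K] H) ∘ₗ TensorProduct.map Coalgebra.comul Coalgebra.comul := by
  apply TensorProduct.ext'
  intro a b
  simp only [LinearMap.comp_apply, LinearMap.mul'_apply, Bialgebra.comul_mul,
    TensorProduct.map_tmul]

lemma cv_repr_tmul {A : Type u} [Ring A] [Algebra K A] (f g : (H ⊗[K] H) →ₗ[K] A) (a b : H) {ι κ : Type*}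
    (ra : Coalgebra.Repr K a ι) (rb : Coalgebra.Repr K b κ) :
    cv f g (a ⊗ₜ[K] b) = ∑ i ∈ ra.index, ∑ j ∈ rb.index,
      f (ra.left i ⊗ₜ[K] rb.left j) * g (ra.right i ⊗ₜ[K] rb.right j) := by
  simp only [cv, LinearMap.comp_apply, comul_tmul', ← ra.eq, ← rb.eq, TensorProduct.sum_tmul,
    TensorProduct.tmul_sum, map_sum, TensorProduct.tensorTensorTensorComm_tmul,
    TensorProduct.map_tmul, LinearMap.mul'_apply]
  rw [Finset.sum_comm]

lemma cvUnit_comp_mul : (cvUnit : H →ₗ[K] H) ∘ₗ m = (cvUnit : H ⊗[K] H →ₗ[K] H) := by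
  rw [cvUnit, cvUnit, LinearMap.comp_assoc, counit_comp_mul]

lemma antipode_mul (a b : H) : σ (a * b) = σ b * σ a := by
  have h1 : cv (σ ∘ₗ m) m = (cvUnit : H ⊗[K] H →ₗ[K] H) := by
    have := cv_comp_coalgHom (C := H ⊗[K] H) σ (LinearMap.id) m comul_comp_mul
    rw [cv_antipode_id, LinearMap.id_comp, cvUnit_comp_mul] at this
    exact this.symm
  have h2 : cv m (m ∘ₗ TensorProduct.map σ σ ∘ₗ (TensorProduct.comm K H H).toLinearMap) =
      (cvUnit : H ⊗[K] H →ₗ[K] H) := by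
    apply TensorProduct.ext'
    intro a b
    rw [cv_repr_tmul _ _ a b (ℛ K a) (ℛ K b)]
    have expand : ∀ i ∈ (ℛ K a).index, ∀ j ∈ (ℛ K b).index,
        m ((ℛ K a).left i ⊗ₜ[K] (ℛ K b).left j) *
          (m ∘ₗ TensorProduct.map σ σ ∘ₗ (TensorProduct.comm K H H).toLinearMap)
            ((ℛ K a).right i ⊗ₜ[K] (ℛ K b).right j) =
        (ℛ K a).left i * (((ℛ K b).left j * σ ((ℛ K b).right j)) * σ ((ℛ K a).right i)) := by
      intro i _ j _
      simp only [LinearMap.comp_apply, LinearMap.mul'_apply,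
        LinearEquiv.coe_coe, TensorProduct.comm_tmul, TensorProduct.map_tmul]
      rw [mul_assoc ((ℛ K a).left i), ← mul_assoc ((ℛ K b).left j)]
    rw [Finset.sum_congr rfl (fun i hi => Finset.sum_congr rfl (expand i hi))]
    have inner : ∀ i ∈ (ℛ K a).index,
        ∑ j ∈ (ℛ K b).index, (ℛ K a).left i *
          (((ℛ K b).left j * σ ((ℛ K b).right j)) * σ ((ℛ K a).right i)) =
        Coalgebra.counit (R := K) b • ((ℛ K a).left i * σ ((ℛ K a).right i)) := by
      intro i _
      rw [← Finset.mul_sum, ← Finset.sum_mul, HopfAlgebra.sum_mul_antipode_eq_algebraMap_counit (ℛ K b),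
        Algebra.algebraMap_eq_smul_one, smul_mul_assoc, one_mul, mul_smul_comm]
    rw [Finset.sum_congr rfl inner, ← Finset.smul_sum, HopfAlgebra.sum_mul_antipode_eq_algebraMap_counit (ℛ K a)]
    simp only [cvUnit, LinearMap.comp_apply, Algebra.linearMap_apply, counit_tmul', map_mul,
      Algebra.algebraMap_eq_smul_one]
    rw [smul_mul_assoc, one_mul, smul_smul, smul_smul, mul_comm]
  have key : σ ∘ₗ m = m ∘ₗ TensorProduct.map σ σ ∘ₗ (TensorProduct.comm K H H).toLinearMap :=
    cv_inv_unique h1 h2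
  have := congrArg (fun f => f (a ⊗ₜ[K] b)) key
  simpa using this

end HopfAux
section CocommAux
variable {K H : Type u} [Field K] [CharZero K] [Ring H] [HopfAlgebra K H]
open Coalgebra Finset

local notation "σ" => (HopfAlgebra.antipode K : H →ₗ[K] H)

lemma repr_comm {M : Type u} [AddCommGroup M] [Module K M]
    (hcc : ∀ x : H, (TensorProduct.comm K H H) (Coalgebra.comul x) = Coalgebra.comul x)
    (φ : H ⊗[K] H →ₗ[K] M) {a : H} {ι : Type*} (r : Coalgebra.Repr K a ι) :
    ∑ i ∈ r.index, φ (r.left i ⊗ₜ[K] r.right i) =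
    ∑ i ∈ r.index, φ (r.right i ⊗ₜ[K] r.left i) := by
  have h1 : φ ((TensorProduct.comm K H H) (Coalgebra.comul a)) =
      ∑ i ∈ r.index, φ (r.right i ⊗ₜ[K] r.left i) := by
    rw [← r.eq, map_sum, map_sum]
    simp only [TensorProduct.comm_tmul]
  have h2 : φ (Coalgebra.comul a) = ∑ i ∈ r.index, φ (r.left i ⊗ₜ[K] r.right i) := by
    rw [← r.eq, map_sum]
  rw [← h1, ← h2, hcc a]

lemma antipode_antipode
    (hcc : ∀ x : H, (TensorProduct.comm K H H) (Coalgebra.comul x) = Coalgebra.comul x) :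
    σ ∘ₗ σ = (LinearMap.id : H →ₗ[K] H) := by
  refine cv_inv_unique (g := σ) ?_ cv_antipode_id
  ext a
  rw [cv_repr _ _ (ℛ K a)]
  have e1 : ∀ i ∈ (ℛ K a).index,
      (σ ∘ₗ σ) ((ℛ K a).left i) * σ ((ℛ K a).right i) =
      σ ((ℛ K a).right i * σ ((ℛ K a).left i)) := by
    intro i _
    rw [antipode_mul]
    rfl
  rw [Finset.sum_congr rfl e1, ← map_sum]
  have swap := repr_comm hcc (LinearMap.mul' K H ∘ₗ TensorProduct.map LinearMap.id σ) (ℛ K a)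
  simp only [LinearMap.comp_apply, TensorProduct.map_tmul, LinearMap.mul'_apply,
    LinearMap.id_coe, id_eq] at swap
  rw [← swap, HopfAlgebra.sum_mul_antipode_eq_algebraMap_counit (ℛ K a)]
  simp [cvUnit, Algebra.algebraMap_eq_smul_one, antipode_one]

lemma comul_comp_antipode
    (hcc : ∀ x : H, (TensorProduct.comm K H H) (Coalgebra.comul x) = Coalgebra.comul x) :
    Coalgebra.comul ∘ₗ σ =
      TensorProduct.map σ σ ∘ₗ (Coalgebra.comul : H →ₗ[K] H ⊗[K] H) := by
  have hcomm : (TensorProduct.comm K H H).toLinearMap ∘ₗ Coalgebra.comul =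
      (Coalgebra.comul : H →ₗ[K] H ⊗[K] H) := by
    ext a
    exact hcc a
  have hG : cv (Coalgebra.comul : H →ₗ[K] H ⊗[K] H) (Coalgebra.comul ∘ₗ σ) = cvUnit := by
    have h := cv_algHom_comp (LinearMap.id : H →ₗ[K] H) σ
      (Coalgebra.comul : H →ₗ[K] H ⊗[K] H) mul_comp_comul
    rw [cv_id_antipode, LinearMap.comp_id] at h
    have hu : (Coalgebra.comul : H →ₗ[K] H ⊗[K] H) ∘ₗ (cvUnit : H →ₗ[K] H) =
        (cvUnit : H →ₗ[K] H ⊗[K] H) := by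
      ext a
      simp [cvUnit]
    rw [hu] at h
    exact h.symm
  have hF : cv (TensorProduct.map σ σ ∘ₗ (TensorProduct.comm K H H).toLinearMap ∘ₗ
      Coalgebra.comul) (Coalgebra.comul : H →ₗ[K] H ⊗[K] H) = cvUnit := by
    ext y
    set φ : H ⊗[K] (H ⊗[K] H) →ₗ[K] (H ⊗[K] H) :=
      LinearMap.mul' K (H ⊗[K] H) ∘ₗ
        TensorProduct.map (TensorProduct.map σ σ ∘ₗ (TensorProduct.comm K H H).toLinearMap)
          Coalgebra.comul ∘ₗ (TensorProduct.assoc K H H H).symm.toLinearMap with hφ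
    rw [cv_repr _ _ (ℛ K y)]
    have e1 : ∀ i ∈ (ℛ K y).index,
        (TensorProduct.map σ σ ∘ₗ (TensorProduct.comm K H H).toLinearMap ∘ₗ Coalgebra.comul)
            ((ℛ K y).left i) * Coalgebra.comul ((ℛ K y).right i)
        = ∑ j ∈ (ℛ K ((ℛ K y).left i)).index,
            φ ((ℛ K ((ℛ K y).left i)).left j ⊗ₜ[K]
              ((ℛ K ((ℛ K y).left i)).right j ⊗ₜ[K] (ℛ K y).right i)) := by
      intro i _
      rw [LinearMap.comp_apply, LinearMap.comp_apply, ← (ℛ K ((ℛ K y).left i)).eq]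
      simp only [hφ, map_sum, LinearMap.comp_apply, LinearEquiv.coe_coe,
        TensorProduct.comm_tmul, TensorProduct.map_tmul, TensorProduct.assoc_symm_tmul,
        LinearMap.mul'_apply]
      rw [Finset.sum_mul]
    rw [Finset.sum_congr rfl e1,
      repr_assoc φ (ℛ K y) (fun i => ℛ K ((ℛ K y).left i)) (fun i => ℛ K ((ℛ K y).right i))]
    have e2 : ∀ i ∈ (ℛ K y).index,
        ∑ k ∈ (ℛ K ((ℛ K y).right i)).index,
          φ ((ℛ K y).left i ⊗ₜ[K]
            ((ℛ K ((ℛ K y).right i)).left k ⊗ₜ[K] (ℛ K ((ℛ K y).right i)).right k))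
        = (1 : H) ⊗ₜ[K] (σ ((ℛ K y).left i) * (ℛ K y).right i) := by
      intro i _
      set R := ℛ K ((ℛ K y).right i) with hR
      set χ : H ⊗[K] (H ⊗[K] H) →ₗ[K] (H ⊗[K] H) :=
        TensorProduct.map (LinearMap.mul' K H ∘ₗ TensorProduct.map σ LinearMap.id)
          (LinearMap.mulLeft K (σ ((ℛ K y).left i))) ∘ₗ
          (TensorProduct.assoc K H H H).symm.toLinearMap with hχ
      have eA : ∀ k ∈ R.index,
          φ ((ℛ K y).left i ⊗ₜ[K] (R.left k ⊗ₜ[K] R.right k))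
          = ∑ m2 ∈ (ℛ K (R.right k)).index,
              χ (R.left k ⊗ₜ[K]
                ((ℛ K (R.right k)).left m2 ⊗ₜ[K] (ℛ K (R.right k)).right m2)) := by
        intro k _
        simp only [hφ, hχ, LinearMap.comp_apply, LinearEquiv.coe_coe,
          TensorProduct.assoc_symm_tmul, TensorProduct.map_tmul, TensorProduct.comm_tmul,
          LinearMap.mul'_apply, LinearMap.mulLeft_apply, LinearMap.id_coe, id_eq,
          ← (ℛ K (R.right k)).eq, TensorProduct.tmul_sum, map_sum, Finset.mul_sum,
          Algebra.TensorProduct.tmul_mul_tmul]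
      rw [Finset.sum_congr rfl eA,
        ← repr_assoc χ R (fun k => ℛ K (R.left k)) (fun k => ℛ K (R.right k))]
      have eB : ∀ k ∈ R.index,
          ∑ m2 ∈ (ℛ K (R.left k)).index,
            χ ((ℛ K (R.left k)).left m2 ⊗ₜ[K] ((ℛ K (R.left k)).right m2 ⊗ₜ[K] R.right k))
          = Coalgebra.counit (R := K) (R.left k) •
              ((1 : H) ⊗ₜ[K] (σ ((ℛ K y).left i) * R.right k)) := by
        intro k _
        simp only [hχ, LinearMap.comp_apply, LinearEquiv.coe_coe,
          TensorProduct.assoc_symm_tmul, TensorProduct.map_tmul, LinearMap.mul'_apply,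
          LinearMap.mulLeft_apply, LinearMap.id_coe, id_eq]
        rw [← TensorProduct.sum_tmul, HopfAlgebra.sum_antipode_mul_eq_algebraMap_counit (ℛ K (R.left k)),
          Algebra.algebraMap_eq_smul_one, TensorProduct.smul_tmul']
      rw [Finset.sum_congr rfl eB]
      have hθ := congrArg (TensorProduct.mk K H H 1 ∘ₗ LinearMap.mulLeft K (σ ((ℛ K y).left i)))
        (counit_smul_right_sum R)
      rw [map_sum] at hθ
      simp only [map_smul, LinearMap.comp_apply, LinearMap.mulLeft_apply,
        TensorProduct.mk_apply] at hθ
      exact hθ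
    rw [Finset.sum_congr rfl e2]
    have hθ2 := congrArg (TensorProduct.mk K H H 1) (HopfAlgebra.sum_antipode_mul_eq_algebraMap_counit (ℛ K y))
    rw [map_sum] at hθ2
    simp only [TensorProduct.mk_apply] at hθ2
    rw [hθ2]
    simp [cvUnit, Algebra.algebraMap_eq_smul_one, Algebra.TensorProduct.one_def,
      TensorProduct.tmul_smul, TensorProduct.smul_tmul']
  have := cv_inv_unique hF hG
  rw [← this, hcomm]

end CocommAux

section RBMain
variable {K H : Type u} [Field K] [CharZero K] [Ring H] [HopfAlgebra K H]
open Coalgebra Finset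

lemma conv_eq_cv {C : Type u} [AddCommGroup C] [Module K C] [Coalgebra K C]
    (f g : C →ₗ[K] H) : conv f g = cv f g := rfl

lemma aS_def : aS K H = (HopfAlgebra.antipode K : H →ₗ[K] H) := rfl

lemma hcc' (hcc : _root_.IsCocomm K H) :
    ∀ x : H, (TensorProduct.comm K H H) (Coalgebra.comul x) = Coalgebra.comul x := hcc

lemma cc1 (hcc : _root_.IsCocomm K H) (u v : H →ₗ[K] H) :
    aS K H ∘ₗ conv u v = conv (aS K H ∘ₗ v) (aS K H ∘ₗ u) := by
  rw [aS_def]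
  ext y
  rw [LinearMap.comp_apply, conv_eq_cv, conv_eq_cv, cv_repr u v (ℛ K y),
    cv_repr _ _ (ℛ K y), map_sum]
  have e1 : ∀ i ∈ (ℛ K y).index,
      (HopfAlgebra.antipode K : H →ₗ[K] H) (u ((ℛ K y).left i) * v ((ℛ K y).right i)) =
      (HopfAlgebra.antipode K : H →ₗ[K] H) (v ((ℛ K y).right i)) *
        (HopfAlgebra.antipode K : H →ₗ[K] H) (u ((ℛ K y).left i)) := by
    intro i _
    exact antipode_mul _ _
  rw [Finset.sum_congr rfl e1]
  have swap := repr_comm (hcc' hcc)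
    (LinearMap.mul' K H ∘ₗ TensorProduct.map
      ((HopfAlgebra.antipode K : H →ₗ[K] H) ∘ₗ v) ((HopfAlgebra.antipode K : H →ₗ[K] H) ∘ₗ u) ∘ₗ
      (TensorProduct.comm K H H).toLinearMap) (ℛ K y)
  simp only [LinearMap.comp_apply, LinearEquiv.coe_coe, TensorProduct.comm_tmul,
    TensorProduct.map_tmul, LinearMap.mul'_apply] at swap
  exact swap

lemma conv_mulLeft (c : H) (u v : H →ₗ[K] H) :
    conv (LinearMap.mulLeft K c ∘ₗ u) v = LinearMap.mulLeft K c ∘ₗ conv u v := by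
  ext y
  rw [LinearMap.comp_apply, conv_eq_cv, conv_eq_cv, cv_repr _ _ (ℛ K y), cv_repr _ _ (ℛ K y),
    LinearMap.mulLeft_apply, Finset.mul_sum]
  exact Finset.sum_congr rfl fun i _ => by
    rw [LinearMap.comp_apply, LinearMap.mulLeft_apply, mul_assoc]

lemma conv_mulRight (c : H) (u v : H →ₗ[K] H) :
    conv u (LinearMap.mulRight K c ∘ₗ v) = LinearMap.mulRight K c ∘ₗ conv u v := by
  ext y
  rw [LinearMap.comp_apply, conv_eq_cv, conv_eq_cv, cv_repr _ _ (ℛ K y), cv_repr _ _ (ℛ K y),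
    LinearMap.mulRight_apply, Finset.sum_mul]
  exact Finset.sum_congr rfl fun i _ => by
    rw [LinearMap.comp_apply, LinearMap.mulRight_apply, mul_assoc]

lemma mulLeft_cvUnit (c : H) :
    LinearMap.mulLeft K c ∘ₗ (cvUnit : H →ₗ[K] H) = LinearMap.mulRight K c ∘ₗ cvUnit := by
  ext y
  simp [cvUnit, Algebra.algebraMap_eq_smul_one, mul_smul_comm, smul_mul_assoc]

lemma mulB_repr (B : H →ₗ[K] H) (a b : H) {ι : Type*} (r : Coalgebra.Repr K a ι) :
    mulB B (a ⊗ₜ[K] b) = ∑ j ∈ r.index,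
      B (r.left j) * (b * (conv (aS K H ∘ₗ B) LinearMap.id) (r.right j)) := by
  simp only [mulB, wrap, LinearMap.comp_apply, TensorProduct.map_tmul, LinearMap.id_coe, id_eq,
    ← r.eq, TensorProduct.sum_tmul, map_sum, LinearEquiv.coe_coe, TensorProduct.assoc_tmul,
    TensorProduct.comm_tmul, LinearMap.mul'_apply]

lemma rb_conv (B : H →ₗ[K] H) (hcc : _root_.IsCocomm K H) (hB : IsRotaBaxter B) (g : H →ₗ[K] H) :
    conv B (B ∘ₗ g) =
      B ∘ₗ conv B (conv g (conv (aS K H ∘ₗ B) LinearMap.id)) := by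
  ext y
  set ξ : H →ₗ[K] H := conv (aS K H ∘ₗ B) LinearMap.id with hξ
  set φ : H ⊗[K] (H ⊗[K] H) →ₗ[K] H :=
    LinearMap.mul' K H ∘ₗ TensorProduct.map B
      (LinearMap.mul' K H ∘ₗ TensorProduct.map g ξ ∘ₗ (TensorProduct.comm K H H).toLinearMap)
    with hφ
  rw [conv_eq_cv B (B ∘ₗ g), cv_repr B (B ∘ₗ g) (ℛ K y)]
  have e1 : ∀ i ∈ (ℛ K y).index,
      B ((ℛ K y).left i) * (B ∘ₗ g) ((ℛ K y).right i)
      = B (∑ j ∈ (ℛ K ((ℛ K y).left i)).index,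
          φ ((ℛ K ((ℛ K y).left i)).left j ⊗ₜ[K]
            ((ℛ K ((ℛ K y).left i)).right j ⊗ₜ[K] (ℛ K y).right i))) := by
    intro i _
    rw [LinearMap.comp_apply, hB.2.2,
      mulB_repr B ((ℛ K y).left i) (g ((ℛ K y).right i)) (ℛ K ((ℛ K y).left i))]
    congr 1
  rw [Finset.sum_congr rfl e1, ← map_sum,
    repr_assoc φ (ℛ K y) (fun i => ℛ K ((ℛ K y).left i)) (fun i => ℛ K ((ℛ K y).right i))]
  have e2 : ∀ i ∈ (ℛ K y).index,
      ∑ k ∈ (ℛ K ((ℛ K y).right i)).index,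
        φ ((ℛ K y).left i ⊗ₜ[K]
          ((ℛ K ((ℛ K y).right i)).left k ⊗ₜ[K] (ℛ K ((ℛ K y).right i)).right k))
      = B ((ℛ K y).left i) * conv g ξ ((ℛ K y).right i) := by
    intro i _
    have swap := repr_comm (hcc' hcc)
      (LinearMap.mulLeft K (B ((ℛ K y).left i)) ∘ₗ LinearMap.mul' K H ∘ₗ
        TensorProduct.map g ξ ∘ₗ (TensorProduct.comm K H H).toLinearMap)
      (ℛ K ((ℛ K y).right i))
    simp only [LinearMap.comp_apply, LinearEquiv.coe_coe, TensorProduct.comm_tmul,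
      TensorProduct.map_tmul, LinearMap.mul'_apply, LinearMap.mulLeft_apply] at swap
    have lhs : ∀ k ∈ (ℛ K ((ℛ K y).right i)).index,
        φ ((ℛ K y).left i ⊗ₜ[K]
          ((ℛ K ((ℛ K y).right i)).left k ⊗ₜ[K] (ℛ K ((ℛ K y).right i)).right k))
        = B ((ℛ K y).left i) *
            (g ((ℛ K ((ℛ K y).right i)).right k) * ξ ((ℛ K ((ℛ K y).right i)).left k)) := by
      intro k _
      simp only [hφ, LinearMap.comp_apply, LinearEquiv.coe_coe, TensorProduct.comm_tmul,
        TensorProduct.map_tmul, LinearMap.mul'_apply]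
    rw [Finset.sum_congr rfl lhs, swap, conv_eq_cv g ξ, cv_repr g ξ (ℛ K ((ℛ K y).right i)),
      Finset.mul_sum]
  rw [Finset.sum_congr rfl e2, LinearMap.comp_apply]
  congr 1
  rw [conv_eq_cv B (conv g ξ), cv_repr B (conv g ξ) (ℛ K y)]

lemma conv_B_sB (B : H →ₗ[K] H) (hB : IsRotaBaxter B) :
    conv B (aS K H ∘ₗ B) = (cvUnit : H →ₗ[K] H) := by
  have h := cv_comp_coalgHom (LinearMap.id : H →ₗ[K] H)
    (HopfAlgebra.antipode K : H →ₗ[K] H) B hB.1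
  rw [cv_id_antipode, LinearMap.id_comp] at h
  have hu : (cvUnit : H →ₗ[K] H) ∘ₗ B = cvUnit := by
    rw [cvUnit, LinearMap.comp_assoc, hB.2.1]
  rw [hu] at h
  exact h.symm

lemma claimA (B : H →ₗ[K] H) (hB : IsRotaBaxter B) :
    conv B (conv (aS K H ∘ₗ B) LinearMap.id) = (LinearMap.id : H →ₗ[K] H) := by
  calc conv B (conv (aS K H ∘ₗ B) LinearMap.id)
      = cv (cv B (aS K H ∘ₗ B)) LinearMap.id := (cv_assoc _ _ _).symm
    _ = cv cvUnit LinearMap.id := by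
        rw [← conv_eq_cv B (aS K H ∘ₗ B), conv_B_sB B hB]
    _ = LinearMap.id := cv_unit_left _

lemma Bt_comp_S (B : H →ₗ[K] H) (hcc : _root_.IsCocomm K H) :
    Bt B ∘ₗ aS K H = conv (aS K H) B := by
  have h := cv_comp_coalgHom (LinearMap.id : H →ₗ[K] H)
    (B ∘ₗ (HopfAlgebra.antipode K : H →ₗ[K] H)) (HopfAlgebra.antipode K : H →ₗ[K] H)
    (comul_comp_antipode (hcc' hcc))
  rw [LinearMap.id_comp, LinearMap.comp_assoc, antipode_antipode (hcc' hcc),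
    LinearMap.comp_id] at h
  exact h

lemma sBtS (B : H →ₗ[K] H) (hcc : _root_.IsCocomm K H) :
    aS K H ∘ₗ Bt B ∘ₗ aS K H = conv (aS K H ∘ₗ B) LinearMap.id := by
  rw [Bt_comp_S B hcc, cc1 hcc]
  have h2 : aS K H ∘ₗ aS K H = LinearMap.id := antipode_antipode (hcc' hcc)
  rw [h2]

lemma claimB (B : H →ₗ[K] H) (hcc : _root_.IsCocomm K H) (hB : IsRotaBaxter B) :
    conv (Bt B ∘ₗ aS K H) (conv (aS K H ∘ₗ B) LinearMap.id) = (cvUnit : H →ₗ[K] H) := by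
  rw [Bt_comp_S B hcc]
  calc conv (conv (aS K H) B) (conv (aS K H ∘ₗ B) LinearMap.id)
      = cv (aS K H) (cv B (cv (aS K H ∘ₗ B) LinearMap.id)) := cv_assoc _ _ _
    _ = cv (aS K H) LinearMap.id := by
        rw [← conv_eq_cv (aS K H ∘ₗ B) LinearMap.id,
          ← conv_eq_cv B (conv (aS K H ∘ₗ B) LinearMap.id), claimA B hB]
    _ = cvUnit := cv_antipode_id
end RBMain

/-- `S(B(S(B̃(S(y₁))) B̃(x) B̃(S(y₂)))) · S(B(y₃)) = S(B(y B̃(x)))`. -/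
theorem stmt14 (B : H →ₗ[K] H) (hcc : IsCocomm K H) (hB : IsRotaBaxter B) :
    ∀ x y : H,
      conv (aS K H ∘ₗ B ∘ₗ
          conv (aS K H ∘ₗ Bt B ∘ₗ aS K H) (LinearMap.mulLeft K (Bt B x) ∘ₗ Bt B ∘ₗ aS K H))
        (aS K H ∘ₗ B) y = aS K H (B (y * Bt B x)) := by
  intro x y
  have key : conv (aS K H ∘ₗ B ∘ₗ
      conv (aS K H ∘ₗ Bt B ∘ₗ aS K H) (LinearMap.mulLeft K (Bt B x) ∘ₗ Bt B ∘ₗ aS K H))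
      (aS K H ∘ₗ B) = aS K H ∘ₗ B ∘ₗ LinearMap.mulRight K (Bt B x) := by
    set c := Bt B x with hc
    set Φ : H →ₗ[K] H := conv (aS K H ∘ₗ Bt B ∘ₗ aS K H)
      (LinearMap.mulLeft K c ∘ₗ Bt B ∘ₗ aS K H) with hΦ
    set ξ : H →ₗ[K] H := conv (aS K H ∘ₗ B) LinearMap.id with hξ
    have h1 : conv (aS K H ∘ₗ B ∘ₗ Φ) (aS K H ∘ₗ B) = aS K H ∘ₗ conv B (B ∘ₗ Φ) := by
      rw [cc1 hcc B (B ∘ₗ Φ)]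
    have h2 : conv (LinearMap.mulLeft K c ∘ₗ Bt B ∘ₗ aS K H) ξ =
        LinearMap.mulRight K c ∘ₗ cvUnit := by
      rw [conv_mulLeft c (Bt B ∘ₗ aS K H) ξ, hξ, claimB B hcc hB, mulLeft_cvUnit]
    have h3 : conv Φ ξ = LinearMap.mulRight K c ∘ₗ ξ := by
      rw [hΦ, conv_eq_cv (aS K H ∘ₗ Bt B ∘ₗ aS K H), conv_eq_cv _ ξ, cv_assoc,
        ← conv_eq_cv (K := K), ← conv_eq_cv (K := K), h2,
        conv_mulRight c (aS K H ∘ₗ Bt B ∘ₗ aS K H) cvUnit, conv_eq_cv, cv_unit_right,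
        sBtS B hcc, hξ]
    have h4 : conv B (conv Φ ξ) = LinearMap.mulRight K c := by
      rw [h3, conv_mulRight c B ξ, hξ, claimA B hB, LinearMap.comp_id]
    rw [h1, rb_conv B hcc hB Φ, ← hξ, h4]
  have := congrArg (fun f : H →ₗ[K] H => f y) key
  simpa using this

end
end

section
/- Let (H, B) be a Rota–Baxter Hopf algebra of weight −1 and define B̃(x) = x₁ B(S(x₂)). Then for all x, y ∈ H the following identity holds: S(B(S(B̃(S(B(S(x₁))))) · y · B̃(S(B(S(x₂)))))) · S(B(B̃(x₃))) = S(B(y B̃(x))). -/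
open TensorProduct LinearMap

noncomputable section

universe u

variable {K H : Type u} [Field K] [CharZero K] [Ring H] [HopfAlgebra K H]

namespace RBAux
open Coalgebra

variable (K) in
/-- general convolution -/
def gcnv {C A : Type u} [AddCommGroup C] [Module K C] [Coalgebra K C]
    [Ring A] [Algebra K A] (f g : C →ₗ[K] A) : C →ₗ[K] A :=
  LinearMap.mul' K A ∘ₗ TensorProduct.map f g ∘ₗ Coalgebra.comul

variable (K) in
/-- convolution unit -/
def cunit (C A : Type u) [AddCommGroup C] [Module K C] [Coalgebra K C]
    [Ring A] [Algebra K A] : C →ₗ[K] A :=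
  Algebra.linearMap K A ∘ₗ Coalgebra.counit

variable {C A : Type u} [AddCommGroup C] [Module K C] [Coalgebra K C] [Ring A] [Algebra K A]

lemma gcnv_apply_repr (f g : C →ₗ[K] A) {x : C} {ι : Type*} (r : Coalgebra.Repr K x ι) :
    gcnv K f g x = ∑ i ∈ r.index, f (r.left i) * g (r.right i) := by
  simp only [gcnv, LinearMap.comp_apply, ← r.eq, map_sum, TensorProduct.map_tmul,
    LinearMap.mul'_apply]

lemma sum_counit_smul {x : C} {ι : Type*} (r : Coalgebra.Repr K x ι) :
    ∑ i ∈ r.index, Coalgebra.counit (R := K) (r.left i) • r.right i = x := by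
  have h2 : (TensorProduct.lid K C) (∑ i ∈ r.index,
      Coalgebra.counit (R := K) (r.left i) ⊗ₜ[K] r.right i)
      = ∑ i ∈ r.index, Coalgebra.counit (R := K) (r.left i) • r.right i := by
    rw [map_sum]; simp
  rw [← h2, Coalgebra.sum_counit_tmul_eq r]; simp

lemma sum_smul_counit {x : C} {ι : Type*} (r : Coalgebra.Repr K x ι) :
    ∑ i ∈ r.index, Coalgebra.counit (R := K) (r.right i) • r.left i = x := by
  have h2 : (TensorProduct.rid K C) (∑ i ∈ r.index,
      r.left i ⊗ₜ[K] Coalgebra.counit (R := K) (r.right i))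
      = ∑ i ∈ r.index, Coalgebra.counit (R := K) (r.right i) • r.left i := by
    rw [map_sum]; simp
  rw [← h2, Coalgebra.sum_tmul_counit_eq r]; simp

lemma gcnv_cunit_right (f : C →ₗ[K] A) : gcnv K f (cunit K C A) = f := by
  ext x
  have hmap : TensorProduct.map f ((Algebra.linearMap K A) ∘ₗ (Coalgebra.counit : C →ₗ[K] K))
      = TensorProduct.map f (Algebra.linearMap K A) ∘ₗ
        LinearMap.lTensor C (Coalgebra.counit : C →ₗ[K] K) := by
    rw [LinearMap.lTensor, ← TensorProduct.map_comp]; simp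
  simp only [gcnv, cunit, LinearMap.comp_apply, hmap,
    Coalgebra.lTensor_counit_comul (R := K) x]
  simp

lemma gcnv_cunit_left (f : C →ₗ[K] A) : gcnv K (cunit K C A) f = f := by
  ext x
  have hmap : TensorProduct.map ((Algebra.linearMap K A) ∘ₗ (Coalgebra.counit : C →ₗ[K] K)) f
      = TensorProduct.map (Algebra.linearMap K A) f ∘ₗ
        LinearMap.rTensor C (Coalgebra.counit : C →ₗ[K] K) := by
    rw [LinearMap.rTensor, ← TensorProduct.map_comp]; simp
  simp only [gcnv, cunit, LinearMap.comp_apply, hmap,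
    Coalgebra.rTensor_counit_comul (R := K) x]
  simp

lemma gcnv_assoc (f g h : C →ₗ[K] A) :
    gcnv K (gcnv K f g) h = gcnv K f (gcnv K g h) := by
  ext x
  obtain r := Coalgebra.Repr.arbitrary K x
  have ra : ∀ i, Coalgebra.Repr K (r.left i) (C × C) := fun i => Coalgebra.Repr.arbitrary K _
  have rb : ∀ i, Coalgebra.Repr K (r.right i) (C × C) := fun i => Coalgebra.Repr.arbitrary K _
  have key := Coalgebra.sum_tmul_tmul_eq r ra rb
  -- apply the trilinear multiplication map
  have key2 := congrArg (LinearMap.mul' K A ∘ₗ TensorProduct.map f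
      (LinearMap.mul' K A ∘ₗ TensorProduct.map g h)) key
  simp only [map_sum, LinearMap.comp_apply,
    TensorProduct.map_tmul, LinearMap.mul'_apply] at key2
  rw [gcnv_apply_repr (gcnv K f g) h r, gcnv_apply_repr f (gcnv K g h) r]
  calc ∑ i ∈ r.index, gcnv K f g (r.left i) * h (r.right i)
      = ∑ i ∈ r.index, ∑ j ∈ (ra i).index,
          f ((ra i).left j) * (g ((ra i).right j) * h (r.right i)) := by
        refine Finset.sum_congr rfl fun i _ => ?_
        rw [gcnv_apply_repr f g (ra i), Finset.sum_mul]
        exact Finset.sum_congr rfl fun j _ => (mul_assoc _ _ _)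
    _ = ∑ i ∈ r.index, ∑ j ∈ (rb i).index,
          f (r.left i) * (g ((rb i).left j) * h ((rb i).right j)) := key2
    _ = ∑ i ∈ r.index, f (r.left i) * gcnv K g h (r.right i) := by
        refine Finset.sum_congr rfl fun i _ => ?_
        rw [gcnv_apply_repr g h (rb i), Finset.mul_sum]

lemma gcnv_unique {a b c : C →ₗ[K] A} (h1 : gcnv K a b = cunit K C A)
    (h2 : gcnv K b c = cunit K C A) : a = c := by
  have : gcnv K a (gcnv K b c) = gcnv K (gcnv K a b) c := (gcnv_assoc a b c).symm
  rw [h1, h2, gcnv_cunit_right, gcnv_cunit_left] at this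
  exact this
variable (K) in
def IsCoalgMap {C D : Type u} [AddCommGroup C] [Module K C] [Coalgebra K C]
    [AddCommGroup D] [Module K D] [Coalgebra K D] (f : C →ₗ[K] D) : Prop :=
  (Coalgebra.comul ∘ₗ f = TensorProduct.map f f ∘ₗ Coalgebra.comul) ∧
  (Coalgebra.counit ∘ₗ f = Coalgebra.counit)

section basic
variable {C C' A : Type u} [AddCommGroup C] [Module K C] [Coalgebra K C]
  [AddCommGroup C'] [Module K C'] [Coalgebra K C'] [Ring A] [Algebra K A]

lemma IsCoalgMap.id : IsCoalgMap K (LinearMap.id : C →ₗ[K] C) := by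
  constructor <;> ext x <;> simp

lemma IsCoalgMap.comp {D E : Type u} [AddCommGroup D] [Module K D] [Coalgebra K D]
    [AddCommGroup E] [Module K E] [Coalgebra K E]
    {f : D →ₗ[K] E} {g : C →ₗ[K] D} (hf : IsCoalgMap K f) (hg : IsCoalgMap K g) :
    IsCoalgMap K (f ∘ₗ g) := by
  refine ⟨?_, ?_⟩
  · rw [← LinearMap.comp_assoc, hf.1, LinearMap.comp_assoc, hg.1,
      ← LinearMap.comp_assoc, ← TensorProduct.map_comp]
  · rw [← LinearMap.comp_assoc, hf.2, hg.2]

lemma gcnv_comp (f g : C →ₗ[K] A) (h : C' →ₗ[K] C) (hh : IsCoalgMap K h) :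
    gcnv K f g ∘ₗ h = gcnv K (f ∘ₗ h) (g ∘ₗ h) := by
  unfold gcnv
  rw [LinearMap.comp_assoc, LinearMap.comp_assoc, hh.1, TensorProduct.map_comp]
  simp only [LinearMap.comp_assoc]


lemma gcnv_antipode_id : gcnv K (aS K H) LinearMap.id = cunit K H H := by
  unfold gcnv cunit aS
  rw [← HopfAlgebra.mul_antipode_rTensor_comul (R := K) (A := H), LinearMap.rTensor]

lemma gcnv_id_antipode : gcnv K LinearMap.id (aS K H) = cunit K H H := by
  unfold gcnv cunit aS
  rw [← HopfAlgebra.mul_antipode_lTensor_comul (R := K) (A := H), LinearMap.lTensor]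

/-- push a representation through a coalgebra map -/
def reprMap {D : Type u} [AddCommGroup D] [Module K D] [Coalgebra K D]
    {f : C →ₗ[K] D} (hf : IsCoalgMap K f) {x : C} {ι : Type*} (r : Coalgebra.Repr K x ι) :
    Coalgebra.Repr K (f x) ι where
  index := r.index
  left := f ∘ r.left
  right := f ∘ r.right
  eq := by
    have := congrArg (TensorProduct.map f f) r.eq
    simp only [map_sum, TensorProduct.map_tmul] at this
    simpa [this] using (LinearMap.congr_fun hf.1 x).symm

lemma counit_apply_of_coalgMap {D : Type u} [AddCommGroup D] [Module K D] [Coalgebra K D]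
    {f : C →ₗ[K] D} (hf : IsCoalgMap K f) (x : C) :
    Coalgebra.counit (R := K) (f x) = Coalgebra.counit (R := K) x :=
  LinearMap.congr_fun hf.2 x

lemma IsCoalgMap.gcnv_antipode_right {f : C →ₗ[K] H} (hf : IsCoalgMap K f) :
    gcnv K f (aS K H ∘ₗ f) = cunit K C H := by
  ext x
  obtain r := Coalgebra.Repr.arbitrary K x
  rw [gcnv_apply_repr _ _ r]
  have := HopfAlgebra.sum_mul_antipode_eq_algebraMap_counit (R := K) (reprMap hf r)
  simp only [reprMap, Function.comp] at this
  simp only [LinearMap.comp_apply, aS]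
  rw [this, counit_apply_of_coalgMap hf]
  simp [cunit]

lemma IsCoalgMap.gcnv_antipode_left {f : C →ₗ[K] H} (hf : IsCoalgMap K f) :
    gcnv K (aS K H ∘ₗ f) f = cunit K C H := by
  ext x
  obtain r := Coalgebra.Repr.arbitrary K x
  rw [gcnv_apply_repr _ _ r]
  have := HopfAlgebra.sum_antipode_mul_eq_algebraMap_counit (R := K) (reprMap hf r)
  simp only [reprMap, Function.comp] at this
  simp only [LinearMap.comp_apply, aS]
  rw [this, counit_apply_of_coalgMap hf]
  simp [cunit]

end basic

section cocomm

lemma comm_comul (hcc : _root_.IsCocomm K H) :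
    (TensorProduct.comm K H H).toLinearMap ∘ₗ (Coalgebra.comul (R := K) (A := H))
      = Coalgebra.comul := LinearMap.ext hcc

lemma assocNat {M N P M' N' P' : Type u}
    [AddCommGroup M] [Module K M] [AddCommGroup N] [Module K N] [AddCommGroup P] [Module K P]
    [AddCommGroup M'] [Module K M'] [AddCommGroup N'] [Module K N'] [AddCommGroup P'] [Module K P']
    (f : M →ₗ[K] M') (g : N →ₗ[K] N') (h : P →ₗ[K] P') :
    (TensorProduct.assoc K M' N' P').toLinearMap ∘ₗ
        TensorProduct.map (TensorProduct.map f g) h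
      = TensorProduct.map f (TensorProduct.map g h) ∘ₗ
        (TensorProduct.assoc K M N P).toLinearMap := by
  apply TensorProduct.ext_threefold
  intro x y z
  simp

lemma leftComm_comp_assoc :
    (TensorProduct.leftComm K H H H).toLinearMap ∘ₗ (TensorProduct.assoc K H H H).toLinearMap
      = (TensorProduct.assoc K H H H).toLinearMap ∘ₗ
        LinearMap.rTensor H (TensorProduct.comm K H H).toLinearMap := by
  apply TensorProduct.ext_threefold
  intro x y z
  simp

/-- the iterated comultiplication `x ↦ x₁ ⊗ (x₂ ⊗ x₃)` -/
def Dl : H →ₗ[K] H ⊗[K] (H ⊗[K] H) :=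
  LinearMap.lTensor H (Coalgebra.comul (R := K)) ∘ₗ Coalgebra.comul

lemma Dl_eq : Dl (K := K) (H := H) = (TensorProduct.assoc K H H H).toLinearMap ∘ₗ
    LinearMap.rTensor H (Coalgebra.comul (R := K)) ∘ₗ Coalgebra.comul :=
  Coalgebra.coassoc.symm

lemma leftComm_Dl (hcc : _root_.IsCocomm K H) :
    (TensorProduct.leftComm K H H H).toLinearMap ∘ₗ Dl (K := K) (H := H) = Dl := by
  rw [Dl_eq, ← LinearMap.comp_assoc, ← LinearMap.comp_assoc, leftComm_comp_assoc]
  rw [LinearMap.comp_assoc, LinearMap.comp_assoc]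
  rw [← LinearMap.comp_assoc (Coalgebra.comul) (LinearMap.rTensor H _) (LinearMap.rTensor H _)]
  rw [← LinearMap.rTensor_comp, comm_comul hcc]

lemma comulHH_eq : (Coalgebra.comul (R := K) (A := H ⊗[K] H))
    = (TensorProduct.tensorTensorTensorComm K H H H H).toLinearMap ∘ₗ
      TensorProduct.map (Coalgebra.comul (R := K)) (Coalgebra.comul (R := K)) := by
  have h := Bialgebra.TensorProduct.comul_eq_algHom_toLinearMap K K H H
  rw [h]
  apply TensorProduct.ext'
  intro a b
  simp only [LinearMap.comp_apply, TensorProduct.map_tmul, AlgHom.toLinearMap_apply,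
    AlgHom.coe_comp, Function.comp_apply, Algebra.TensorProduct.map_tmul,
    AlgHom.coe_coe, LinearEquiv.coe_coe]
  rfl

/-- The master cocommutativity identity: `Δ_{H⊗H} ∘ Δ = (Δ ⊗ Δ) ∘ Δ`. -/
lemma master4 (hcc : _root_.IsCocomm K H) :
    (Coalgebra.comul (R := K) (A := H ⊗[K] H)) ∘ₗ (Coalgebra.comul (R := K) (A := H))
      = TensorProduct.map (Coalgebra.comul (R := K)) (Coalgebra.comul (R := K)) ∘ₗ
        Coalgebra.comul := by
  set Δ := (Coalgebra.comul (R := K) (A := H))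
  set ι := (TensorProduct.assoc K H H (H ⊗[K] H)).toLinearMap
  set ι₀ := (TensorProduct.assoc K H H H).toLinearMap
  have hmap : TensorProduct.map Δ Δ
      = LinearMap.lTensor (H ⊗[K] H) Δ ∘ₗ LinearMap.rTensor H Δ :=
    (LinearMap.lTensor_comp_rTensor _ _ _).symm
  have hA : ι ∘ₗ TensorProduct.map Δ Δ ∘ₗ Δ
      = LinearMap.lTensor H (Dl (K := K) (H := H)) ∘ₗ Δ := by
    rw [hmap]
    have h1 : ι ∘ₗ LinearMap.lTensor (H ⊗[K] H) Δ
        = LinearMap.lTensor H (LinearMap.lTensor H Δ) ∘ₗ ι₀ := by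
      have := assocNat (K := K) (LinearMap.id : H →ₗ[K] H) (LinearMap.id : H →ₗ[K] H) Δ
      simpa [LinearMap.lTensor, TensorProduct.map_id] using this
    calc ι ∘ₗ (LinearMap.lTensor (H ⊗[K] H) Δ ∘ₗ LinearMap.rTensor H Δ) ∘ₗ Δ
        = (ι ∘ₗ LinearMap.lTensor (H ⊗[K] H) Δ) ∘ₗ (LinearMap.rTensor H Δ ∘ₗ Δ) := by
          simp only [LinearMap.comp_assoc]
      _ = LinearMap.lTensor H (LinearMap.lTensor H Δ) ∘ₗ
            (ι₀ ∘ₗ LinearMap.rTensor H Δ ∘ₗ Δ) := by rw [h1]; simp only [LinearMap.comp_assoc]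
      _ = LinearMap.lTensor H (LinearMap.lTensor H Δ) ∘ₗ (LinearMap.lTensor H Δ ∘ₗ Δ) := by
          rw [Coalgebra.coassoc]
      _ = LinearMap.lTensor H (Dl (K := K) (H := H)) ∘ₗ Δ := by
          rw [← LinearMap.comp_assoc, ← LinearMap.lTensor_comp]; rfl
  have hB : ι ∘ₗ (TensorProduct.tensorTensorTensorComm K H H H H).toLinearMap
      = LinearMap.lTensor H (TensorProduct.leftComm K H H H).toLinearMap ∘ₗ ι := by
    apply TensorProduct.ext_fourfold'
    intro x y z w
    simp [ι]
  have key : ι ∘ₗ (Coalgebra.comul (R := K) (A := H ⊗[K] H)) ∘ₗ Δ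
      = ι ∘ₗ TensorProduct.map Δ Δ ∘ₗ Δ := by
    rw [comulHH_eq]
    calc ι ∘ₗ ((TensorProduct.tensorTensorTensorComm K H H H H).toLinearMap ∘ₗ
            TensorProduct.map Δ Δ) ∘ₗ Δ
        = (ι ∘ₗ (TensorProduct.tensorTensorTensorComm K H H H H).toLinearMap) ∘ₗ
            TensorProduct.map Δ Δ ∘ₗ Δ := by simp only [LinearMap.comp_assoc]
      _ = LinearMap.lTensor H (TensorProduct.leftComm K H H H).toLinearMap ∘ₗ
            (ι ∘ₗ TensorProduct.map Δ Δ ∘ₗ Δ) := by rw [hB]; simp only [LinearMap.comp_assoc]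
      _ = LinearMap.lTensor H (TensorProduct.leftComm K H H H).toLinearMap ∘ₗ
            (LinearMap.lTensor H (Dl (K := K) (H := H)) ∘ₗ Δ) := by rw [hA]
      _ = LinearMap.lTensor H ((TensorProduct.leftComm K H H H).toLinearMap ∘ₗ
            Dl (K := K) (H := H)) ∘ₗ Δ := by
          rw [← LinearMap.comp_assoc, ← LinearMap.lTensor_comp]
      _ = LinearMap.lTensor H (Dl (K := K) (H := H)) ∘ₗ Δ := by rw [leftComm_Dl hcc]
      _ = ι ∘ₗ TensorProduct.map Δ Δ ∘ₗ Δ := hA.symm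
  ext x
  have := LinearMap.congr_fun key x
  simp only [LinearMap.comp_apply] at this
  exact (TensorProduct.assoc K H H (H ⊗[K] H)).injective this

end cocomm

section HHfacts

lemma counitHH_tmul (a b : H) :
    Coalgebra.counit (R := K) (a ⊗ₜ[K] b)
      = Coalgebra.counit (R := K) a * Coalgebra.counit (R := K) b := by
  have h := congrArg (fun φ => φ (a ⊗ₜ[K] b))
    (Bialgebra.TensorProduct.counit_eq_algHom_toLinearMap K K H H)
  simpa [mul_comm] using h

lemma counit_comp_mul' :
    (Coalgebra.counit (R := K) (A := H)) ∘ₗ LinearMap.mul' K H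
      = Coalgebra.counit (R := K) (A := H ⊗[K] H) := by
  apply TensorProduct.ext'
  intro a b
  simp [counitHH_tmul, Bialgebra.counit_mul, mul_comm]

lemma comul_comp_mul' :
    (Coalgebra.comul (R := K) (A := H)) ∘ₗ LinearMap.mul' K H
      = LinearMap.mul' K (H ⊗[K] H) ∘ₗ
        TensorProduct.map (Coalgebra.comul (R := K)) (Coalgebra.comul (R := K)) := by
  apply TensorProduct.ext'
  intro a b
  simp [Bialgebra.comul_mul]

lemma mul'HH_eq : LinearMap.mul' K (H ⊗[K] H)
    = TensorProduct.map (LinearMap.mul' K H) (LinearMap.mul' K H) ∘ₗ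
      (TensorProduct.tensorTensorTensorComm K H H H H).toLinearMap := by
  apply TensorProduct.ext_fourfold'
  intro x y z w
  simp [Algebra.TensorProduct.tmul_mul_tmul]

lemma counitHH_comp_comul :
    (Coalgebra.counit (R := K) (A := H ⊗[K] H)) ∘ₗ (Coalgebra.comul (R := K) (A := H))
      = Coalgebra.counit := by
  ext x
  obtain r := Coalgebra.Repr.arbitrary K x
  have h2 := congrArg (Coalgebra.counit (R := K)) (sum_counit_smul r)
  simp only [map_sum, map_smul, smul_eq_mul] at h2
  show Coalgebra.counit (R := K) (A := H ⊗[K] H) (Coalgebra.comul (R := K) x)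
      = Coalgebra.counit (R := K) x
  rw [← r.eq, map_sum, Finset.sum_congr rfl fun i _ => counitHH_tmul (K := K) _ _]
  exact h2

lemma gcnv_comul_comulS : gcnv K (Coalgebra.comul (R := K) (A := H))
    ((Coalgebra.comul (R := K)) ∘ₗ aS K H) = cunit K H (H ⊗[K] H) := by
  ext x
  obtain r := Coalgebra.Repr.arbitrary K x
  rw [gcnv_apply_repr _ _ r]
  have : ∀ i ∈ r.index, Coalgebra.comul (R := K) (r.left i) *
      ((Coalgebra.comul (R := K)) ∘ₗ aS K H) (r.right i)
      = Coalgebra.comul (R := K) (r.left i * aS K H (r.right i)) := by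
    intro i _
    simp [Bialgebra.comul_mul]
  rw [Finset.sum_congr rfl this, ← map_sum]
  have h2 := HopfAlgebra.sum_mul_antipode_eq_algebraMap_counit (R := K) r
  simp only [aS]
  rw [h2]
  simp [cunit]

lemma gcnv_comulS_comul : gcnv K ((Coalgebra.comul (R := K) (A := H)) ∘ₗ aS K H)
    (Coalgebra.comul (R := K)) = cunit K H (H ⊗[K] H) := by
  ext x
  obtain r := Coalgebra.Repr.arbitrary K x
  rw [gcnv_apply_repr _ _ r]
  have : ∀ i ∈ r.index, ((Coalgebra.comul (R := K)) ∘ₗ aS K H) (r.left i) *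
      Coalgebra.comul (R := K) (r.right i)
      = Coalgebra.comul (R := K) (aS K H (r.left i) * r.right i) := by
    intro i _
    simp [Bialgebra.comul_mul]
  rw [Finset.sum_congr rfl this, ← map_sum]
  have h2 := HopfAlgebra.sum_antipode_mul_eq_algebraMap_counit (R := K) r
  simp only [aS]
  rw [h2]
  simp [cunit]

lemma mapSS_axiom :
    LinearMap.mul' K (H ⊗[K] H) ∘ₗ
      LinearMap.lTensor (H ⊗[K] H) (TensorProduct.map (aS K H) (aS K H)) ∘ₗ
      (Coalgebra.comul (R := K) (A := H ⊗[K] H))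
    = Algebra.linearMap K (H ⊗[K] H) ∘ₗ Coalgebra.counit := by
  apply TensorProduct.ext'
  intro a b
  obtain ra := Coalgebra.Repr.arbitrary K a
  obtain rb := Coalgebra.Repr.arbitrary K b
  have hcom : Coalgebra.comul (R := K) (a ⊗ₜ[K] b)
      = ∑ i ∈ ra.index, ∑ j ∈ rb.index,
          (ra.left i ⊗ₜ[K] rb.left j) ⊗ₜ[K] (ra.right i ⊗ₜ[K] rb.right j) := by
    have := congrArg (fun φ => φ (a ⊗ₜ[K] b)) (comulHH_eq (K := K) (H := H))
    simp only [LinearMap.comp_apply, TensorProduct.map_tmul] at this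
    rw [this, ← ra.eq, ← rb.eq, TensorProduct.sum_tmul]
    rw [map_sum]
    refine Finset.sum_congr rfl fun i _ => ?_
    rw [TensorProduct.tmul_sum, map_sum]
    refine Finset.sum_congr rfl fun j _ => ?_
    simp
  simp only [LinearMap.comp_apply, hcom, map_sum]
  simp only [LinearMap.lTensor_tmul, TensorProduct.map_tmul, LinearMap.mul'_apply,
    Algebra.TensorProduct.tmul_mul_tmul]
  have : ∑ i ∈ ra.index, ∑ j ∈ rb.index,
      (ra.left i * aS K H (ra.right i)) ⊗ₜ[K] (rb.left j * aS K H (rb.right j))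
      = (∑ i ∈ ra.index, ra.left i * aS K H (ra.right i)) ⊗ₜ[K]
        (∑ j ∈ rb.index, rb.left j * aS K H (rb.right j)) := by
    rw [TensorProduct.sum_tmul]
    exact Finset.sum_congr rfl fun i _ => (TensorProduct.tmul_sum _ _ _).symm
  rw [this]
  simp only [aS, HopfAlgebra.sum_mul_antipode_eq_algebraMap_counit]
  rw [counitHH_tmul]
  simp only [Algebra.TensorProduct.algebraMap_apply, Algebra.algebraMap_eq_smul_one,
    TensorProduct.smul_tmul', TensorProduct.tmul_smul, smul_smul]
  rw [mul_comm (Coalgebra.counit (R := K) b), ← TensorProduct.smul_tmul',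
    ← Algebra.TensorProduct.one_def]
  simp [Algebra.algebraMap_eq_smul_one]

lemma S_comul (hcc : _root_.IsCocomm K H) :
    (Coalgebra.comul (R := K) (A := H)) ∘ₗ aS K H
      = TensorProduct.map (aS K H) (aS K H) ∘ₗ Coalgebra.comul := by
  refine gcnv_unique gcnv_comulS_comul ?_
  -- gcnv Δ (map S S ∘ Δ) = cunit
  have hmap : TensorProduct.map (Coalgebra.comul (R := K) (A := H))
      (TensorProduct.map (aS K H) (aS K H) ∘ₗ Coalgebra.comul)
      = LinearMap.lTensor (H ⊗[K] H) (TensorProduct.map (aS K H) (aS K H)) ∘ₗ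
        TensorProduct.map (Coalgebra.comul (R := K)) (Coalgebra.comul (R := K)) := by
    rw [LinearMap.lTensor, ← TensorProduct.map_comp]
    simp
  unfold gcnv
  rw [hmap]
  calc LinearMap.mul' K (H ⊗[K] H) ∘ₗ
        (LinearMap.lTensor (H ⊗[K] H) (TensorProduct.map (aS K H) (aS K H)) ∘ₗ
          TensorProduct.map (Coalgebra.comul (R := K)) (Coalgebra.comul (R := K))) ∘ₗ
        Coalgebra.comul
      = LinearMap.mul' K (H ⊗[K] H) ∘ₗ
        LinearMap.lTensor (H ⊗[K] H) (TensorProduct.map (aS K H) (aS K H)) ∘ₗ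
        ((Coalgebra.comul (R := K) (A := H ⊗[K] H)) ∘ₗ Coalgebra.comul) := by
        rw [master4 hcc]; simp only [LinearMap.comp_assoc]
    _ = (LinearMap.mul' K (H ⊗[K] H) ∘ₗ
        LinearMap.lTensor (H ⊗[K] H) (TensorProduct.map (aS K H) (aS K H)) ∘ₗ
        (Coalgebra.comul (R := K) (A := H ⊗[K] H))) ∘ₗ Coalgebra.comul := by
        simp only [LinearMap.comp_assoc]
    _ = (Algebra.linearMap K (H ⊗[K] H) ∘ₗ Coalgebra.counit) ∘ₗ Coalgebra.comul := by
        rw [mapSS_axiom]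
    _ = cunit K H (H ⊗[K] H) := by
        rw [LinearMap.comp_assoc, counitHH_comp_comul]; rfl

lemma counit_S : (Coalgebra.counit (R := K) (A := H)) ∘ₗ aS K H = Coalgebra.counit := by
  ext x
  obtain r := Coalgebra.Repr.arbitrary K x
  have h1 := congrArg (Coalgebra.counit (R := K)) (HopfAlgebra.sum_antipode_mul_eq_algebraMap_counit (R := K) r)
  simp only [map_sum, Bialgebra.counit_mul, Bialgebra.counit_algebraMap] at h1
  have h2 := congrArg (fun y => Coalgebra.counit (R := K) (aS K H y)) (sum_smul_counit r)
  simp only [map_sum, map_smul, smul_eq_mul] at h2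
  simp only [LinearMap.comp_apply, aS] at h1 h2 ⊢
  rw [← h2, ← h1]
  exact Finset.sum_congr rfl fun i _ => mul_comm _ _

lemma isCoalgMap_S (hcc : _root_.IsCocomm K H) : IsCoalgMap K (aS K H) :=
  ⟨S_comul hcc, counit_S⟩

lemma S_S (hcc : _root_.IsCocomm K H) : aS K H ∘ₗ aS K H = LinearMap.id := by
  refine (gcnv_unique gcnv_id_antipode ?_).symm
  exact (isCoalgMap_S hcc).gcnv_antipode_right

end HHfacts

section antihom

lemma comm_natural (p q : H →ₗ[K] H) :
    (TensorProduct.comm K H H).toLinearMap ∘ₗ TensorProduct.map p q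
      = TensorProduct.map q p ∘ₗ (TensorProduct.comm K H H).toLinearMap := by
  apply TensorProduct.ext'
  intro a b
  simp

lemma mul'_coalgMap : IsCoalgMap K (LinearMap.mul' K H) := by
  constructor
  · rw [comul_comp_mul', mul'HH_eq, comulHH_eq]
    simp only [LinearMap.comp_assoc]
  · exact counit_comp_mul'

variable (K H) in
/-- the reversed multiplication composed with `S ⊗ S` -/
def nu : H ⊗[K] H →ₗ[K] H :=
  LinearMap.mul' K H ∘ₗ TensorProduct.map (aS K H) (aS K H) ∘ₗ
    (TensorProduct.comm K H H).toLinearMap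

lemma nu_tmul (u v : H) : nu K H (u ⊗ₜ[K] v) = aS K H v * aS K H u := by
  simp [nu]

lemma comul_tmulHH (a b : H) {ι κ : Type*} (ra : Coalgebra.Repr K a ι) (rb : Coalgebra.Repr K b κ) :
    Coalgebra.comul (R := K) (a ⊗ₜ[K] b)
      = ∑ i ∈ ra.index, ∑ j ∈ rb.index,
          (ra.left i ⊗ₜ[K] rb.left j) ⊗ₜ[K] (ra.right i ⊗ₜ[K] rb.right j) := by
  have := congrArg (fun φ => φ (a ⊗ₜ[K] b)) (comulHH_eq (K := K) (H := H))
  simp only [LinearMap.comp_apply, TensorProduct.map_tmul] at this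
  rw [this, ← ra.eq, ← rb.eq, TensorProduct.sum_tmul, map_sum]
  refine Finset.sum_congr rfl fun i _ => ?_
  rw [TensorProduct.tmul_sum, map_sum]
  refine Finset.sum_congr rfl fun j _ => ?_
  simp

lemma gcnv_mul'_nu : gcnv K (LinearMap.mul' K H) (nu K H) = cunit K (H ⊗[K] H) H := by
  apply TensorProduct.ext'
  intro a b
  obtain ra := Coalgebra.Repr.arbitrary K a
  obtain rb := Coalgebra.Repr.arbitrary K b
  have hcom := comul_tmulHH a b ra rb
  show LinearMap.mul' K H (TensorProduct.map _ _ (Coalgebra.comul (a ⊗ₜ[K] b))) = _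
  rw [hcom]
  simp only [map_sum, TensorProduct.map_tmul, LinearMap.mul'_apply, nu_tmul]
  have hterm : ∀ i ∈ ra.index, ∑ j ∈ rb.index,
      (ra.left i * rb.left j) * (aS K H (rb.right j) * aS K H (ra.right i))
      = Coalgebra.counit (R := K) b • (ra.left i * aS K H (ra.right i)) := by
    intro i _
    have hj : ∀ j ∈ rb.index,
        (ra.left i * rb.left j) * (aS K H (rb.right j) * aS K H (ra.right i))
        = ra.left i * ((rb.left j * aS K H (rb.right j)) * aS K H (ra.right i)) := by
      intro j _
      rw [mul_assoc, ← mul_assoc (rb.left j)]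
    rw [Finset.sum_congr rfl hj, ← Finset.mul_sum, ← Finset.sum_mul]
    have h2 := HopfAlgebra.sum_mul_antipode_eq_algebraMap_counit (R := K) rb
    simp only [aS]
    rw [h2, ← Algebra.smul_def, mul_smul_comm]
  rw [Finset.sum_congr rfl hterm, ← Finset.smul_sum]
  have h3 := HopfAlgebra.sum_mul_antipode_eq_algebraMap_counit (R := K) ra
  simp only [aS]
  rw [h3]
  simp only [cunit, counitHH_tmul, Algebra.smul_def, map_mul, LinearMap.comp_apply,
    Algebra.linearMap_apply]
  exact Algebra.commutes _ _

lemma S_mul' : aS K H ∘ₗ LinearMap.mul' K H = nu K H :=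
  gcnv_unique mul'_coalgMap.gcnv_antipode_left gcnv_mul'_nu

lemma S_gcnv (hcc : _root_.IsCocomm K H) (p q : H →ₗ[K] H) :
    aS K H ∘ₗ gcnv K p q = gcnv K (aS K H ∘ₗ q) (aS K H ∘ₗ p) := by
  unfold gcnv
  calc aS K H ∘ₗ LinearMap.mul' K H ∘ₗ TensorProduct.map p q ∘ₗ Coalgebra.comul
      = (aS K H ∘ₗ LinearMap.mul' K H) ∘ₗ TensorProduct.map p q ∘ₗ Coalgebra.comul := by
        simp only [LinearMap.comp_assoc]
    _ = (LinearMap.mul' K H ∘ₗ TensorProduct.map (aS K H) (aS K H)) ∘ₗ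
          ((TensorProduct.comm K H H).toLinearMap ∘ₗ TensorProduct.map p q) ∘ₗ
          Coalgebra.comul := by rw [S_mul']; unfold nu; simp only [LinearMap.comp_assoc]
    _ = (LinearMap.mul' K H ∘ₗ TensorProduct.map (aS K H) (aS K H)) ∘ₗ
          TensorProduct.map q p ∘ₗ
          ((TensorProduct.comm K H H).toLinearMap ∘ₗ Coalgebra.comul) := by
        rw [comm_natural]; simp only [LinearMap.comp_assoc]
    _ = LinearMap.mul' K H ∘ₗ (TensorProduct.map (aS K H) (aS K H) ∘ₗ
          TensorProduct.map q p) ∘ₗ Coalgebra.comul := by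
        rw [comm_comul hcc]; simp only [LinearMap.comp_assoc]
    _ = LinearMap.mul' K H ∘ₗ TensorProduct.map (aS K H ∘ₗ q) (aS K H ∘ₗ p) ∘ₗ
          Coalgebra.comul := by rw [← TensorProduct.map_comp]

lemma counitHH_map {f g : H →ₗ[K] H} (hf : IsCoalgMap K f) (hg : IsCoalgMap K g) :
    (Coalgebra.counit (R := K) (A := H ⊗[K] H)) ∘ₗ TensorProduct.map f g
      = Coalgebra.counit := by
  apply TensorProduct.ext'
  intro a b
  simp only [LinearMap.comp_apply, TensorProduct.map_tmul, counitHH_tmul]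
  rw [counit_apply_of_coalgMap hf, counit_apply_of_coalgMap hg]

lemma gcnv_isCoalgMap (hcc : _root_.IsCocomm K H) {f g : H →ₗ[K] H}
    (hf : IsCoalgMap K f) (hg : IsCoalgMap K g) : IsCoalgMap K (gcnv K f g) := by
  constructor
  · show Coalgebra.comul ∘ₗ (LinearMap.mul' K H ∘ₗ TensorProduct.map f g ∘ₗ Coalgebra.comul)
      = _
    have hX : LinearMap.mul' K (H ⊗[K] H) ∘ₗ
        TensorProduct.map (TensorProduct.map f f) (TensorProduct.map g g) ∘ₗ
        (TensorProduct.tensorTensorTensorComm K H H H H).toLinearMap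
        = TensorProduct.map (LinearMap.mul' K H) (LinearMap.mul' K H) ∘ₗ
          TensorProduct.map (TensorProduct.map f g) (TensorProduct.map f g) := by
      apply TensorProduct.ext_fourfold'
      intro x y z w
      simp [Algebra.TensorProduct.tmul_mul_tmul]
    calc Coalgebra.comul ∘ₗ LinearMap.mul' K H ∘ₗ TensorProduct.map f g ∘ₗ Coalgebra.comul
        = (Coalgebra.comul ∘ₗ LinearMap.mul' K H) ∘ₗ TensorProduct.map f g ∘ₗ
            Coalgebra.comul := by simp only [LinearMap.comp_assoc]
      _ = LinearMap.mul' K (H ⊗[K] H) ∘ₗ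
            (TensorProduct.map (Coalgebra.comul (R := K)) (Coalgebra.comul (R := K)) ∘ₗ
              TensorProduct.map f g) ∘ₗ Coalgebra.comul := by
          rw [comul_comp_mul']; simp only [LinearMap.comp_assoc]
      _ = LinearMap.mul' K (H ⊗[K] H) ∘ₗ
            TensorProduct.map (TensorProduct.map f f) (TensorProduct.map g g) ∘ₗ
            (TensorProduct.map (Coalgebra.comul (R := K)) (Coalgebra.comul (R := K)) ∘ₗ
              Coalgebra.comul) := by
          rw [← TensorProduct.map_comp, hf.1, hg.1, TensorProduct.map_comp]
          simp only [LinearMap.comp_assoc]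
      _ = LinearMap.mul' K (H ⊗[K] H) ∘ₗ
            TensorProduct.map (TensorProduct.map f f) (TensorProduct.map g g) ∘ₗ
            ((Coalgebra.comul (R := K) (A := H ⊗[K] H)) ∘ₗ Coalgebra.comul) := by
          rw [master4 hcc]
      _ = LinearMap.mul' K (H ⊗[K] H) ∘ₗ
            TensorProduct.map (TensorProduct.map f f) (TensorProduct.map g g) ∘ₗ
            (TensorProduct.tensorTensorTensorComm K H H H H).toLinearMap ∘ₗ
            TensorProduct.map (Coalgebra.comul (R := K)) (Coalgebra.comul (R := K)) ∘ₗ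
            Coalgebra.comul := by rw [comulHH_eq]; simp only [LinearMap.comp_assoc]
      _ = (LinearMap.mul' K (H ⊗[K] H) ∘ₗ
            TensorProduct.map (TensorProduct.map f f) (TensorProduct.map g g) ∘ₗ
            (TensorProduct.tensorTensorTensorComm K H H H H).toLinearMap) ∘ₗ
            TensorProduct.map (Coalgebra.comul (R := K)) (Coalgebra.comul (R := K)) ∘ₗ
            Coalgebra.comul := by simp only [LinearMap.comp_assoc]
      _ = TensorProduct.map (gcnv K f g) (gcnv K f g) ∘ₗ Coalgebra.comul := by
          rw [hX]
          unfold gcnv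
          rw [TensorProduct.map_comp, TensorProduct.map_comp]
          simp only [LinearMap.comp_assoc]
  · show Coalgebra.counit ∘ₗ (LinearMap.mul' K H ∘ₗ TensorProduct.map f g ∘ₗ Coalgebra.comul)
      = _
    calc Coalgebra.counit ∘ₗ LinearMap.mul' K H ∘ₗ TensorProduct.map f g ∘ₗ Coalgebra.comul
        = ((Coalgebra.counit ∘ₗ LinearMap.mul' K H) ∘ₗ TensorProduct.map f g) ∘ₗ
            Coalgebra.comul := by simp only [LinearMap.comp_assoc]
      _ = Coalgebra.counit := by
          rw [counit_comp_mul', counitHH_map hf hg, counitHH_comp_comul]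

lemma gcnv_mulLeft {C : Type u} [AddCommGroup C] [Module K C] [Coalgebra K C]
    (y : H) (p q : C →ₗ[K] H) :
    gcnv K (LinearMap.mulLeft K y ∘ₗ p) q = LinearMap.mulLeft K y ∘ₗ gcnv K p q := by
  unfold gcnv
  have : LinearMap.mul' K H ∘ₗ TensorProduct.map (LinearMap.mulLeft K y ∘ₗ p) q
      = LinearMap.mulLeft K y ∘ₗ LinearMap.mul' K H ∘ₗ TensorProduct.map p q := by
    apply TensorProduct.ext'
    intro a b
    simp [mul_assoc]
  rw [← LinearMap.comp_assoc, this]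
  simp only [LinearMap.comp_assoc]

end antihom

section mainRB
variable {B : H →ₗ[K] H}

lemma conv_eq_gcnv {C : Type u} [AddCommGroup C] [Module K C] [Coalgebra K C]
    (f g : C →ₗ[K] H) : conv f g = gcnv K f g := rfl

lemma isCoalgMap_B (hB : IsRotaBaxter B) : IsCoalgMap K B := ⟨hB.1, hB.2.1⟩

lemma isCoalgMap_Bt (hcc : _root_.IsCocomm K H) (hB : IsRotaBaxter B) :
    IsCoalgMap K (Bt B) := by
  unfold Bt
  rw [conv_eq_gcnv]
  exact gcnv_isCoalgMap hcc IsCoalgMap.id ((isCoalgMap_B hB).comp (isCoalgMap_S hcc))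

lemma RBmap (hB : IsRotaBaxter B) :
    LinearMap.mul' K H ∘ₗ TensorProduct.map B B = B ∘ₗ mulB B := by
  apply TensorProduct.ext'
  intro x y
  simpa using hB.2.2 x y

lemma lemW (hcc : _root_.IsCocomm K H) (p q r s w : H →ₗ[K] H) (hs : IsCoalgMap K s) :
    wrap p q r ∘ₗ TensorProduct.map s w ∘ₗ Coalgebra.comul
      = gcnv K (p ∘ₗ s) (gcnv K (q ∘ₗ w) (r ∘ₗ s)) := by
  unfold wrap
  have h1 : TensorProduct.map (Coalgebra.comul (R := K)) (LinearMap.id (M := H)) ∘ₗ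
      TensorProduct.map s w
      = TensorProduct.map (TensorProduct.map s s) w ∘ₗ
        TensorProduct.map (Coalgebra.comul (R := K)) LinearMap.id := by
    apply TensorProduct.ext'
    intro a b
    have hsa := LinearMap.congr_fun hs.1 a
    simp only [LinearMap.comp_apply] at hsa
    simp [hsa]
  have h2 : (TensorProduct.assoc K H H H).toLinearMap ∘ₗ
      TensorProduct.map (TensorProduct.map s s) w
      = TensorProduct.map s (TensorProduct.map s w) ∘ₗ
        (TensorProduct.assoc K H H H).toLinearMap := assocNat s s w
  have h3 : TensorProduct.map p
        (LinearMap.mul' K H ∘ₗ TensorProduct.map q r ∘ₗ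
          (TensorProduct.comm K H H).toLinearMap) ∘ₗ
      TensorProduct.map s (TensorProduct.map s w)
      = TensorProduct.map (p ∘ₗ s)
        ((LinearMap.mul' K H ∘ₗ TensorProduct.map q r ∘ₗ
          (TensorProduct.comm K H H).toLinearMap) ∘ₗ TensorProduct.map s w) := by
    rw [← TensorProduct.map_comp]
  have h4 : (LinearMap.mul' K H ∘ₗ TensorProduct.map q r ∘ₗ
        (TensorProduct.comm K H H).toLinearMap) ∘ₗ TensorProduct.map s w
      = LinearMap.mul' K H ∘ₗ TensorProduct.map (q ∘ₗ w) (r ∘ₗ s) ∘ₗ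
        (TensorProduct.comm K H H).toLinearMap := by
    calc (LinearMap.mul' K H ∘ₗ TensorProduct.map q r ∘ₗ
            (TensorProduct.comm K H H).toLinearMap) ∘ₗ TensorProduct.map s w
        = LinearMap.mul' K H ∘ₗ TensorProduct.map q r ∘ₗ
            ((TensorProduct.comm K H H).toLinearMap ∘ₗ TensorProduct.map s w) := by
          simp only [LinearMap.comp_assoc]
      _ = LinearMap.mul' K H ∘ₗ (TensorProduct.map q r ∘ₗ TensorProduct.map w s) ∘ₗ
            (TensorProduct.comm K H H).toLinearMap := by
          rw [comm_natural]; simp only [LinearMap.comp_assoc]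
      _ = LinearMap.mul' K H ∘ₗ TensorProduct.map (q ∘ₗ w) (r ∘ₗ s) ∘ₗ
            (TensorProduct.comm K H H).toLinearMap := by rw [← TensorProduct.map_comp]
  have h5 : (TensorProduct.assoc K H H H).toLinearMap ∘ₗ
        TensorProduct.map (Coalgebra.comul (R := K)) (LinearMap.id (M := H)) ∘ₗ
        Coalgebra.comul
      = TensorProduct.map LinearMap.id (Coalgebra.comul (R := K)) ∘ₗ Coalgebra.comul := by
    have hc := Coalgebra.coassoc (R := K) (A := H)
    rw [LinearMap.rTensor] at hc
    rw [hc, LinearMap.lTensor]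
  calc (LinearMap.mul' K H ∘ₗ
          TensorProduct.map p (LinearMap.mul' K H ∘ₗ TensorProduct.map q r ∘ₗ
            (TensorProduct.comm K H H).toLinearMap) ∘ₗ
          (TensorProduct.assoc K H H H).toLinearMap ∘ₗ
          TensorProduct.map Coalgebra.comul LinearMap.id) ∘ₗ
        TensorProduct.map s w ∘ₗ Coalgebra.comul
      = LinearMap.mul' K H ∘ₗ
          TensorProduct.map p (LinearMap.mul' K H ∘ₗ TensorProduct.map q r ∘ₗ
            (TensorProduct.comm K H H).toLinearMap) ∘ₗ
          (TensorProduct.assoc K H H H).toLinearMap ∘ₗ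
          (TensorProduct.map Coalgebra.comul LinearMap.id ∘ₗ
            TensorProduct.map s w) ∘ₗ Coalgebra.comul := by
        simp only [LinearMap.comp_assoc]
    _ = LinearMap.mul' K H ∘ₗ
          TensorProduct.map p (LinearMap.mul' K H ∘ₗ TensorProduct.map q r ∘ₗ
            (TensorProduct.comm K H H).toLinearMap) ∘ₗ
          ((TensorProduct.assoc K H H H).toLinearMap ∘ₗ
            TensorProduct.map (TensorProduct.map s s) w) ∘ₗ
          TensorProduct.map Coalgebra.comul LinearMap.id ∘ₗ Coalgebra.comul := by
        rw [h1]; simp only [LinearMap.comp_assoc]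
    _ = LinearMap.mul' K H ∘ₗ
          (TensorProduct.map p (LinearMap.mul' K H ∘ₗ TensorProduct.map q r ∘ₗ
            (TensorProduct.comm K H H).toLinearMap) ∘ₗ
          TensorProduct.map s (TensorProduct.map s w)) ∘ₗ
          (TensorProduct.assoc K H H H).toLinearMap ∘ₗ
          TensorProduct.map Coalgebra.comul LinearMap.id ∘ₗ Coalgebra.comul := by
        rw [h2]; simp only [LinearMap.comp_assoc]
    _ = LinearMap.mul' K H ∘ₗ
          TensorProduct.map (p ∘ₗ s)
            (LinearMap.mul' K H ∘ₗ TensorProduct.map (q ∘ₗ w) (r ∘ₗ s) ∘ₗ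
              (TensorProduct.comm K H H).toLinearMap) ∘ₗ
          TensorProduct.map LinearMap.id (Coalgebra.comul (R := K)) ∘ₗ
          Coalgebra.comul := by
        rw [h3, h4, h5]
    _ = LinearMap.mul' K H ∘ₗ
          TensorProduct.map (p ∘ₗ s)
            ((LinearMap.mul' K H ∘ₗ TensorProduct.map (q ∘ₗ w) (r ∘ₗ s) ∘ₗ
              (TensorProduct.comm K H H).toLinearMap) ∘ₗ Coalgebra.comul) ∘ₗ
          Coalgebra.comul := by
        have h6 : TensorProduct.map (p ∘ₗ s)
              (LinearMap.mul' K H ∘ₗ TensorProduct.map (q ∘ₗ w) (r ∘ₗ s) ∘ₗ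
                (TensorProduct.comm K H H).toLinearMap) ∘ₗ
            TensorProduct.map LinearMap.id (Coalgebra.comul (R := K))
            = TensorProduct.map (p ∘ₗ s)
              ((LinearMap.mul' K H ∘ₗ TensorProduct.map (q ∘ₗ w) (r ∘ₗ s) ∘ₗ
                (TensorProduct.comm K H H).toLinearMap) ∘ₗ Coalgebra.comul) := by
          rw [← TensorProduct.map_comp, LinearMap.comp_id]
        rw [← h6]
        simp only [LinearMap.comp_assoc]
    _ = gcnv K (p ∘ₗ s) (gcnv K (q ∘ₗ w) (r ∘ₗ s)) := by
        unfold gcnv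
        congr 2
        simp only [LinearMap.comp_assoc]
        rw [comm_comul hcc]

lemma step2 (hcc : _root_.IsCocomm K H) (hB : IsRotaBaxter B) :
    gcnv K (B ∘ₗ aS K H) (B ∘ₗ Bt B) = B ∘ₗ B ∘ₗ aS K H := by
  have hSc := isCoalgMap_S (K := K) (H := H) hcc
  have hBS : IsCoalgMap K (B ∘ₗ aS K H) := (isCoalgMap_B hB).comp hSc
  have hm : TensorProduct.map (B ∘ₗ aS K H) (B ∘ₗ Bt B)
      = TensorProduct.map B B ∘ₗ TensorProduct.map (aS K H) (Bt B) := by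
    rw [← TensorProduct.map_comp]
  have h0 : gcnv K (B ∘ₗ aS K H) (B ∘ₗ Bt B)
      = B ∘ₗ (mulB B ∘ₗ TensorProduct.map (aS K H) (Bt B) ∘ₗ Coalgebra.comul) := by
    unfold gcnv
    rw [hm]
    calc LinearMap.mul' K H ∘ₗ (TensorProduct.map B B ∘ₗ
            TensorProduct.map (aS K H) (Bt B)) ∘ₗ Coalgebra.comul
        = (LinearMap.mul' K H ∘ₗ TensorProduct.map B B) ∘ₗ
            TensorProduct.map (aS K H) (Bt B) ∘ₗ Coalgebra.comul := by
          simp only [LinearMap.comp_assoc]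
      _ = (B ∘ₗ mulB B) ∘ₗ TensorProduct.map (aS K H) (Bt B) ∘ₗ Coalgebra.comul := by
          rw [RBmap hB]
      _ = B ∘ₗ (mulB B ∘ₗ TensorProduct.map (aS K H) (Bt B) ∘ₗ Coalgebra.comul) := by
          simp only [LinearMap.comp_assoc]
  rw [h0]
  unfold mulB
  rw [lemW hcc B LinearMap.id (conv (aS K H ∘ₗ B) LinearMap.id) (aS K H) (Bt B) hSc]
  rw [LinearMap.id_comp, conv_eq_gcnv, gcnv_comp _ _ _ hSc, LinearMap.id_comp]
  -- B ∘ₗ gcnv (B∘aS) (gcnv (Bt B) (gcnv ((aS∘B)∘aS) aS))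
  have hBt : Bt B = gcnv K LinearMap.id (B ∘ₗ aS K H) := rfl
  rw [hBt, gcnv_assoc]
  have hinner : gcnv K (B ∘ₗ aS K H)
      (gcnv K ((aS K H ∘ₗ B) ∘ₗ aS K H) (aS K H)) = aS K H := by
    rw [← gcnv_assoc]
    have hc : gcnv K (B ∘ₗ aS K H) ((aS K H ∘ₗ B) ∘ₗ aS K H) = cunit K H H := by
      have h := hBS.gcnv_antipode_right
      simpa [LinearMap.comp_assoc] using h
    rw [hc, gcnv_cunit_left]
  rw [hinner, gcnv_id_antipode, gcnv_cunit_right]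

lemma step3 (hcc : _root_.IsCocomm K H) (hB : IsRotaBaxter B) :
    Bt B ∘ₗ (aS K H ∘ₗ B ∘ₗ aS K H) = B ∘ₗ Bt B := by
  have hSc := isCoalgMap_S (K := K) (H := H) hcc
  have hcomp : IsCoalgMap K (aS K H ∘ₗ B ∘ₗ aS K H) :=
    hSc.comp ((isCoalgMap_B hB).comp hSc)
  have hBt : Bt B = gcnv K LinearMap.id (B ∘ₗ aS K H) := rfl
  rw [hBt, gcnv_comp _ _ _ hcomp, LinearMap.id_comp]
  have hss : (B ∘ₗ aS K H) ∘ₗ (aS K H ∘ₗ B ∘ₗ aS K H) = B ∘ₗ B ∘ₗ aS K H := by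
    calc (B ∘ₗ aS K H) ∘ₗ (aS K H ∘ₗ B ∘ₗ aS K H)
        = B ∘ₗ (aS K H ∘ₗ aS K H) ∘ₗ (B ∘ₗ aS K H) := by simp only [LinearMap.comp_assoc]
      _ = B ∘ₗ B ∘ₗ aS K H := by rw [S_S hcc, LinearMap.id_comp]
  rw [hss, ← step2 hcc hB, ← gcnv_assoc]
  have hc : gcnv K (aS K H ∘ₗ B ∘ₗ aS K H) (B ∘ₗ aS K H) = cunit K H H := by
    have hBS : IsCoalgMap K (B ∘ₗ aS K H) := (isCoalgMap_B hB).comp hSc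
    have h := hBS.gcnv_antipode_left
    simpa [LinearMap.comp_assoc] using h
  rw [hc, gcnv_cunit_left]
  rfl

lemma main_eq (hcc : _root_.IsCocomm K H) (hB : IsRotaBaxter B) (y : H) :
    gcnv K (aS K H ∘ₗ B ∘ₗ gcnv K (aS K H ∘ₗ B ∘ₗ Bt B)
        (LinearMap.mulLeft K y ∘ₗ B ∘ₗ Bt B))
      (aS K H ∘ₗ B ∘ₗ Bt B)
    = aS K H ∘ₗ B ∘ₗ LinearMap.mulLeft K y ∘ₗ Bt B := by
  have hBtc := isCoalgMap_Bt hcc hB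
  have hgc : IsCoalgMap K (B ∘ₗ Bt B) := (isCoalgMap_B hB).comp hBtc
  set Wm := gcnv K (aS K H ∘ₗ B ∘ₗ Bt B) (LinearMap.mulLeft K y ∘ₗ B ∘ₗ Bt B) with hW
  have hM : gcnv K (B ∘ₗ Bt B) (B ∘ₗ Wm)
      = B ∘ₗ LinearMap.mulLeft K y ∘ₗ Bt B := by
    have hm : TensorProduct.map (B ∘ₗ Bt B) (B ∘ₗ Wm)
        = TensorProduct.map B B ∘ₗ TensorProduct.map (Bt B) Wm := by
      rw [← TensorProduct.map_comp]
    have h0 : gcnv K (B ∘ₗ Bt B) (B ∘ₗ Wm)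
        = B ∘ₗ (mulB B ∘ₗ TensorProduct.map (Bt B) Wm ∘ₗ Coalgebra.comul) := by
      unfold gcnv
      rw [hm]
      calc LinearMap.mul' K H ∘ₗ (TensorProduct.map B B ∘ₗ
              TensorProduct.map (Bt B) Wm) ∘ₗ Coalgebra.comul
          = (LinearMap.mul' K H ∘ₗ TensorProduct.map B B) ∘ₗ
              TensorProduct.map (Bt B) Wm ∘ₗ Coalgebra.comul := by
            simp only [LinearMap.comp_assoc]
        _ = (B ∘ₗ mulB B) ∘ₗ TensorProduct.map (Bt B) Wm ∘ₗ Coalgebra.comul := by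
            rw [RBmap hB]
        _ = B ∘ₗ (mulB B ∘ₗ TensorProduct.map (Bt B) Wm ∘ₗ Coalgebra.comul) := by
            simp only [LinearMap.comp_assoc]
    rw [h0]
    unfold mulB
    rw [lemW hcc B LinearMap.id (conv (aS K H ∘ₗ B) LinearMap.id) (Bt B) Wm hBtc]
    rw [LinearMap.id_comp, conv_eq_gcnv, gcnv_comp _ _ _ hBtc, LinearMap.id_comp]
    -- B ∘ₗ gcnv (B∘Bt) (gcnv Wm (gcnv ((aS∘B)∘Bt) (Bt)))
    have ha : (aS K H ∘ₗ B) ∘ₗ Bt B = aS K H ∘ₗ B ∘ₗ Bt B := by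
      simp only [LinearMap.comp_assoc]
    rw [ha, hW, gcnv_assoc, ← gcnv_assoc (B ∘ₗ Bt B)]
    rw [hgc.gcnv_antipode_right, gcnv_cunit_left, gcnv_mulLeft, ← gcnv_assoc,
      hgc.gcnv_antipode_right, gcnv_cunit_left]
  have h5 := S_gcnv hcc (B ∘ₗ Bt B) (B ∘ₗ Wm)
  rw [hM] at h5
  -- h5 : aS ∘ₗ (B∘mulLeft y∘Bt) = gcnv (aS∘(B∘Wm)) (aS∘(B∘Bt))
  rw [← h5]

end mainRB
end RBAux

/-- `S(B(S(B̃(S(B(S(x₁))))) y B̃(S(B(S(x₂)))))) · S(B(B̃(x₃))) = S(B(y B̃(x)))`. -/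
theorem stmt15 (B : H →ₗ[K] H) (hcc : IsCocomm K H) (hB : IsRotaBaxter B) :
    ∀ x y : H,
      conv (aS K H ∘ₗ B ∘ₗ
          conv (aS K H ∘ₗ Bt B ∘ₗ aS K H ∘ₗ B ∘ₗ aS K H)
            (LinearMap.mulLeft K y ∘ₗ Bt B ∘ₗ aS K H ∘ₗ B ∘ₗ aS K H))
        (aS K H ∘ₗ B ∘ₗ Bt B) x = aS K H (B (y * Bt B x)) := by
  intro x y
  have h3 : Bt B ∘ₗ (aS K H ∘ₗ B ∘ₗ aS K H) = B ∘ₗ Bt B := RBAux.step3 hcc hB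
  have e1 : aS K H ∘ₗ Bt B ∘ₗ aS K H ∘ₗ B ∘ₗ aS K H = aS K H ∘ₗ B ∘ₗ Bt B := by
    rw [h3]
  have e2 : LinearMap.mulLeft K y ∘ₗ Bt B ∘ₗ aS K H ∘ₗ B ∘ₗ aS K H
      = LinearMap.mulLeft K y ∘ₗ B ∘ₗ Bt B := by
    rw [h3]
  rw [e1, e2]
  have := LinearMap.congr_fun (RBAux.main_eq (B := B) hcc hB y) x
  simpa [RBAux.conv_eq_gcnv] using this

end
end
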